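/- arXiv:2212.04907 — 11 statements merged into one kernel-verified Lean document; each statement's English description precedes it below -/
import Mathlib

section
/- For a function f analytic on a disk of radius R > |x| centered at 0 with Taylor coefficients a_n, and a real parameter μ with -1/3 ≤ μ ≤ 1 and μ ≠ -1, one has f(μx) = ∑_{n=0}^∞ (μ^n/(μ+1)^{n+1}) ∑_{k=0}^n C(n,k) x^k a_k. -/
open Finset

theorem series_with_parameter (f : ℂ → ℂ) (a : ℕ → ℂ) (R : ℝ)
    (x : ℂ) (hx : ‖x‖ < R)
    (hf : ∀ t : ℂ, ‖t‖ < R → HasSum (fun n : ℕ => a n * t ^ n) (f t))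
    (μ : ℝ) (hμ1 : -1/3 ≤ μ) (hμ2 : μ ≤ 1) (hμ3 : μ ≠ -1) :
    f ((μ : ℂ) * x) =
      ∑' n : ℕ, (μ : ℂ) ^ n / ((μ : ℂ) + 1) ^ (n + 1) *
        ∑ k ∈ range (n + 1), (n.choose k : ℂ) * x ^ k * a k := by
  -- basic real facts
  have hμpos : 0 < μ + 1 := by linarith
  have habs : 2 * |μ| ≤ μ + 1 := by
    rcases abs_cases μ with ⟨h, _⟩ | ⟨h, _⟩ <;> rw [h] <;> linarith
  have hd : 0 < μ + 1 - |μ| := by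
    have := abs_nonneg μ; linarith
  have hs0 : ((μ : ℂ) + 1) ≠ 0 := by
    have : ((μ : ℂ) + 1) = ((μ + 1 : ℝ) : ℂ) := by push_cast; ring
    rw [this]
    exact_mod_cast ne_of_gt hμpos
  have hnorms : ‖(μ : ℂ) + 1‖ = μ + 1 := by
    have : ((μ : ℂ) + 1) = ((μ + 1 : ℝ) : ℂ) := by push_cast; ring
    rw [this, Complex.norm_real, Real.norm_eq_abs, abs_of_pos hμpos]
  set b : ℂ := (μ : ℂ) / ((μ : ℂ) + 1) with hbdef
  have hnormb : ‖b‖ = |μ| / (μ + 1) := by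
    rw [hbdef, norm_div, hnorms, Complex.norm_real, Real.norm_eq_abs]
  have hb : ‖b‖ < 1 := by
    rw [hnormb, div_lt_one hμpos]
    have := abs_nonneg μ; linarith
  have hb' : |μ| / (μ + 1) < 1 := by rw [← hnormb]; exact hb
  -- the double-indexed family
  set g : ℕ × ℕ → ℂ := fun p =>
    (μ : ℂ) ^ (p.1 + p.2) / ((μ : ℂ) + 1) ^ (p.1 + p.2 + 1) *
      ((p.1 + p.2).choose p.1 : ℂ) * x ^ p.1 * a p.1 with hgdef
  have h1b : 1 - b = 1 / ((μ : ℂ) + 1) := by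
    rw [hbdef]; field_simp; ring
  -- fiberwise sums over j
  have hfib : ∀ k : ℕ, HasSum (fun j => g (k, j)) (a k * ((μ : ℂ) * x) ^ k) := by
    intro k
    have H := (hasSum_choose_mul_geometric_of_norm_lt_one k hb).mul_left
      (a k * x ^ k * (μ : ℂ) ^ k / ((μ : ℂ) + 1) ^ (k + 1))
    have hpow : ((μ : ℂ) + 1) ^ (k + 1) ≠ 0 := pow_ne_zero _ hs0
    convert H using 1
    · rfl
    · funext j
      show (μ : ℂ) ^ (k + j) / ((μ : ℂ) + 1) ^ (k + j + 1) *
          ((k + j).choose k : ℂ) * x ^ k * a k = _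
      rw [hbdef, div_pow]
      have : (k + j).choose k = (j + k).choose k := by rw [Nat.add_comm]
      rw [this, pow_add (μ : ℂ), pow_add ((μ : ℂ) + 1) (k + j), pow_add ((μ : ℂ) + 1) k]
      field_simp
      ring
    · rw [h1b, div_pow, one_pow, one_div, one_div, inv_inv, mul_pow]
      field_simp
  -- norm summability
  have hax : Summable fun k => ‖a k‖ * ‖x‖ ^ k := by
    have := (hf x hx).summable
    have := summable_norm_iff.mpr this
    simpa [norm_mul, norm_pow] using this
  have hc1 : |μ| / (μ + 1 - |μ|) ≤ 1 := by
    rw [div_le_one hd]; linarith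
  have hGfib : ∀ k : ℕ, HasSum (fun j => ‖g (k, j)‖)
      (‖a k‖ * ‖x‖ ^ k * (|μ| / (μ + 1 - |μ|)) ^ k / (μ + 1 - |μ|)) := by
    intro k
    have hr : ‖(|μ| / (μ + 1) : ℝ)‖ < 1 := by
      rw [Real.norm_eq_abs, abs_of_nonneg (div_nonneg (abs_nonneg μ) hμpos.le)]
      exact hb'
    have H := (hasSum_choose_mul_geometric_of_norm_lt_one k hr).mul_left
      (‖a k‖ * ‖x‖ ^ k * |μ| ^ k / (μ + 1) ^ (k + 1))
    convert H using 1
    · rfl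
    · funext j
      show ‖(μ : ℂ) ^ (k + j) / ((μ : ℂ) + 1) ^ (k + j + 1) *
          ((k + j).choose k : ℂ) * x ^ k * a k‖ = _
      rw [norm_mul, norm_mul, norm_mul, norm_div, norm_pow, norm_pow, norm_pow,
        hnorms, Complex.norm_real, Real.norm_eq_abs, Complex.norm_natCast]
      have : (k + j).choose k = (j + k).choose k := by rw [Nat.add_comm]
      rw [this, div_pow, pow_add |μ|, pow_add (μ + 1) (k + j), pow_add (μ + 1) k]
      have h1 : (0:ℝ) < (μ + 1) ^ k := pow_pos hμpos k
      have h2 : (0:ℝ) < (μ + 1) ^ j := pow_pos hμpos j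
      field_simp
      ring
    · have h1mb : 1 - |μ| / (μ + 1) = (μ + 1 - |μ|) / (μ + 1) := by
        field_simp
      have h3 : ((μ + 1) : ℝ) ^ (k + 1) ≠ 0 := ne_of_gt (pow_pos hμpos _)
      have h4 : ((μ + 1 - |μ|) : ℝ) ^ (k + 1) ≠ 0 := ne_of_gt (pow_pos hd _)
      have h5 : ((μ + 1 - |μ|) : ℝ) ^ k ≠ 0 := ne_of_gt (pow_pos hd _)
      rw [h1mb, one_div, ← inv_pow, inv_div, div_pow]
      rw [div_pow]
      field_simp
      ring
  have hGk : Summable fun k =>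
      ‖a k‖ * ‖x‖ ^ k * (|μ| / (μ + 1 - |μ|)) ^ k / (μ + 1 - |μ|) := by
    apply Summable.of_nonneg_of_le (fun k => by positivity)
      (fun k => ?_) (hax.mul_right (1 / (μ + 1 - |μ|)))
    rw [div_eq_mul_one_div]
    apply mul_le_mul_of_nonneg_right _ (by positivity)
    have : (|μ| / (μ + 1 - |μ|)) ^ k ≤ 1 := pow_le_one₀ (by positivity) hc1
    calc ‖a k‖ * ‖x‖ ^ k * (|μ| / (μ + 1 - |μ|)) ^ k
        ≤ ‖a k‖ * ‖x‖ ^ k * 1 := by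
          apply mul_le_mul_of_nonneg_left this (by positivity)
      _ = ‖a k‖ * ‖x‖ ^ k := by ring
  have hgnorm : Summable fun p : ℕ × ℕ => ‖g p‖ := by
    apply (summable_prod_of_nonneg (fun p => norm_nonneg _)).2
    exact ⟨fun k => (hGfib k).summable, by
      apply hGk.congr
      intro k
      exact ((hGfib k).tsum_eq).symm⟩
  have hgsum : Summable g := hgnorm.of_norm
  -- total sum is f (μ x)
  have hμx : ‖(μ : ℂ) * x‖ < R := by
    rw [norm_mul, Complex.norm_real, Real.norm_eq_abs]
    calc |μ| * ‖x‖ ≤ 1 * ‖x‖ := by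
          apply mul_le_mul_of_nonneg_right _ (norm_nonneg x)
          rcases abs_cases μ with ⟨h, _⟩ | ⟨h, _⟩ <;> rw [h] <;> linarith
      _ = ‖x‖ := one_mul _
      _ < R := hx
  have htot : HasSum g (f ((μ : ℂ) * x)) := by
    obtain ⟨S, hS⟩ := hgsum
    have := hS.prod_fiberwise hfib
    have huniq := (hf ((μ : ℂ) * x) hμx).unique this
    rwa [← huniq] at hS
  -- reorganize along antidiagonals
  have hsig : HasSum (g ∘ (Finset.HasAntidiagonal.sigmaAntidiagonalEquivProd (A := ℕ)))
      (f ((μ : ℂ) * x)) := (Equiv.hasSum_iff _).2 htot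
  have hants : HasSum (fun n : ℕ => ∑ p ∈ antidiagonal n, g p) (f ((μ : ℂ) * x)) := by
    apply hsig.sigma
    intro n
    have h6 := hasSum_fintype (fun c : (antidiagonal n : Finset (ℕ × ℕ)) => g c)
    rwa [Finset.sum_coe_sort] at h6
  rw [← hants.tsum_eq]
  apply tsum_congr
  intro n
  rw [Finset.Nat.sum_antidiagonal_eq_sum_range_succ_mk, mul_sum]
  apply Finset.sum_congr rfl
  intro k hk
  rw [mem_range] at hk
  have hkn : k + (n - k) = n := by omega
  show (μ : ℂ) ^ (k + (n - k)) / ((μ : ℂ) + 1) ^ (k + (n - k) + 1) *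
      ((k + (n - k)).choose k : ℂ) * x ^ k * a k = _
  rw [hkn]
  ring
end

section
/- For a function f analytic on a disk of radius R > |x| with Taylor coefficients a_n, f(x) = ∑_{n=0}^∞ (1/2^{n+1}) ∑_{k=0}^n C(n,k) x^k a_k (Euler transform representation). -/
open Finset

/-- Key fact: ∑_{n≥0} C(n,k) (1/2)^{n+1} = 1. -/
lemma euler_aux (k : ℕ) :
    HasSum (fun n : ℕ => (n.choose k : ℂ) * (1 / 2 : ℂ) ^ (n + 1)) 1 := by
  have h2 : ‖(1 / 2 : ℂ)‖ < 1 := by norm_num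
  have h := (hasSum_choose_mul_geometric_of_norm_lt_one (𝕜 := ℂ) k h2).mul_right
      ((1 / 2 : ℂ) ^ (k + 1))
  have hval : (1 / (1 - (1/2 : ℂ)) ^ (k + 1)) * (1 / 2 : ℂ) ^ (k + 1) = 1 := by
    have h12 : (1 - (1/2 : ℂ)) = 1/2 := by norm_num
    rw [h12, one_div_mul_cancel (pow_ne_zero _ (by norm_num))]
  rw [hval] at h
  have h' : HasSum (fun n : ℕ => ((n + k).choose k : ℂ) * (1 / 2 : ℂ) ^ ((n + k) + 1)) 1 := by
    convert h using 2 with n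
    · rfl
    ring
  have hz : ∑ i ∈ range k, ((i.choose k : ℂ) * (1 / 2 : ℂ) ^ (i + 1)) = 0 := by
    apply Finset.sum_eq_zero
    intro i hi
    rw [Nat.choose_eq_zero_of_lt (mem_range.mp hi)]
    simp
  have := (hasSum_nat_add_iff (f := fun n : ℕ => (n.choose k : ℂ) * (1 / 2 : ℂ) ^ (n + 1)) k).mp h'
  rwa [hz, add_zero] at this

theorem euler_transform (f : ℂ → ℂ) (a : ℕ → ℂ) (R : ℝ)
    (x : ℂ) (hx : ‖x‖ < R)
    (hf : ∀ t : ℂ, ‖t‖ < R → HasSum (fun n : ℕ => a n * t ^ n) (f t)) :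
    f x = ∑' n : ℕ, (1 / 2 ^ (n + 1) : ℂ) *
        ∑ k ∈ range (n + 1), (n.choose k : ℂ) * x ^ k * a k := by
  set r : ℝ := (‖x‖ + R) / 2 with hr
  have hxr : ‖x‖ < r := by rw [hr]; linarith
  have hrR : r < R := by rw [hr]; linarith
  have hr0 : 0 < r := lt_of_le_of_lt (norm_nonneg x) hxr
  have hsr : HasSum (fun n : ℕ => a n * (r : ℂ) ^ n) (f r) := by
    apply hf
    rwa [Complex.norm_real, Real.norm_eq_abs, abs_of_pos hr0]
  obtain ⟨C, hC⟩ : ∃ C : ℝ, ∀ n, ‖a n‖ * r ^ n ≤ C := by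
    obtain ⟨C, hC⟩ := (hsr.summable.tendsto_atTop_zero.norm).bddAbove_range
    refine ⟨C, fun n => ?_⟩
    have := hC (Set.mem_range_self (f := fun n => ‖a n * (r : ℂ) ^ n‖) n)
    simpa [norm_mul, norm_pow, abs_of_pos hr0] using this
  have hC0 : 0 ≤ C := le_trans (by positivity) (hC 0)
  set q : ℝ := ‖x‖ / r with hq
  have hq0 : 0 ≤ q := by positivity
  have hq1 : q < 1 := (div_lt_one hr0).mpr hxr
  set F : ℕ × ℕ → ℂ := fun p => (p.1.choose p.2 : ℂ) * (1 / 2 : ℂ) ^ (p.1 + 1) * (x ^ p.2 * a p.2)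
    with hF
  have hbound : ∀ p : ℕ × ℕ,
      ‖F p‖ ≤ (p.1.choose p.2 : ℝ) * (1 / 2 : ℝ) ^ (p.1 + 1) * (q ^ p.2 * C) := by
    rintro ⟨n, k⟩
    have heq : ‖F (n, k)‖ = (n.choose k : ℝ) * (1 / 2 : ℝ) ^ (n + 1) * (‖x‖ ^ k * ‖a k‖) := by
      simp [hF, norm_mul, norm_pow, norm_div]
    rw [heq]
    have hak : ‖x‖ ^ k * ‖a k‖ ≤ q ^ k * C := by
      have hxk : ‖x‖ ^ k = q ^ k * r ^ k := by
        rw [hq, div_pow, div_mul_cancel₀]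
        positivity
      rw [hxk, mul_assoc, mul_comm (r ^ k) _]
      gcongr
      exact hC k
    exact mul_le_mul_of_nonneg_left hak (by positivity)
  have hGsum : Summable (fun p : ℕ × ℕ =>
      (p.1.choose p.2 : ℝ) * (1 / 2 : ℝ) ^ (p.1 + 1) * (q ^ p.2 * C)) := by
    rw [summable_prod_of_nonneg (by intro p; positivity)]
    constructor
    · intro n
      apply summable_of_ne_finset_zero (s := range (n + 1))
      intro k hk
      rw [Nat.choose_eq_zero_of_lt (by simpa using hk)]
      simp
    · refine Summable.of_nonneg_of_le (fun n => tsum_nonneg fun k => by positivity)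
        (fun n => ?_)
        (((summable_geometric_of_lt_one (r := (1+q)/2) (by positivity) (by linarith)).mul_left
          (1/2 : ℝ)).mul_right C)
      rw [tsum_eq_sum (s := range (n + 1)) (by
          intro k hk
          rw [Nat.choose_eq_zero_of_lt (by simpa using hk)]
          simp)]
      have h1 : ∑ k ∈ range (n + 1), (n.choose k : ℝ) * (1/2) ^ (n+1) * (q ^ k * C)
            = (1/2) ^ (n+1) * C * ∑ k ∈ range (n + 1), q ^ k * 1 ^ (n - k) * (n.choose k : ℝ) := by
        rw [mul_sum]
        exact Finset.sum_congr rfl (fun k _ => by ring)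
      rw [h1, ← add_pow q 1 n]
      have h2 : (1/2 : ℝ) ^ (n+1) * C * (q + 1) ^ n = (1/2) * ((1+q)/2) ^ n * C := by
        rw [show ((1+q)/2 : ℝ) = (1+q) * (1/2) by ring, mul_pow, pow_succ]
        ring
      rw [h2]
  have hFsum : Summable F := Summable.of_norm_bounded hGsum hbound
  have hfib : ∀ k : ℕ, HasSum (fun n => F (n, k)) (x ^ k * a k) := by
    intro k
    have := (euler_aux k).mul_right (x ^ k * a k)
    simpa only [hF, one_mul, mul_assoc] using this
  have hx' : HasSum (fun k : ℕ => x ^ k * a k) (f x) := by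
    have := hf x hx
    simpa [mul_comm] using this
  calc f x = ∑' k : ℕ, x ^ k * a k := hx'.tsum_eq.symm
    _ = ∑' (k : ℕ) (n : ℕ), F (n, k) := tsum_congr fun k => ((hfib k).tsum_eq).symm
    _ = ∑' (n : ℕ) (k : ℕ), F (n, k) := Summable.tsum_comm hFsum
    _ = ∑' n : ℕ, (1 / 2 ^ (n + 1) : ℂ) *
        ∑ k ∈ range (n + 1), (n.choose k : ℂ) * x ^ k * a k := by
      refine tsum_congr fun n => ?_
      rw [tsum_eq_sum (s := range (n + 1)) (by
        intro k hk
        simp only [hF]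
        rw [Nat.choose_eq_zero_of_lt (by simpa using hk)]
        simp), mul_sum]
      refine Finset.sum_congr rfl fun k _ => ?_
      simp only [hF, one_div, inv_pow]
      ring
end

section
/- For Re s > 1, ζ(s) = (1/(1-2^{1-s})) ∑_{n=0}^∞ (1/2^{n+1}) ∑_{k=0}^n C(n,k) (-1)^k/(k+1)^s (Hasse's formula). -/
open Finset Complex

lemma my_hasSum_antidiagonal {f : ℕ × ℕ → ℂ} (hf : Summable f) :
    HasSum (fun n ↦ ∑ kl ∈ Finset.HasAntidiagonal.antidiagonal n, f kl) (∑' p : ℕ × ℕ, f p) := by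
  have h1 : HasSum (fun x : Σ n : ℕ, (Finset.HasAntidiagonal.antidiagonal n : Finset (ℕ × ℕ)) ↦ f (x.2 : ℕ × ℕ))
      (∑' p : ℕ × ℕ, f p) := Finset.HasAntidiagonal.sigmaAntidiagonalEquivProd.hasSum_iff.mpr hf.hasSum
  have h2 := h1.sigma (fun n ↦ hasSum_fintype fun kl : (Finset.HasAntidiagonal.antidiagonal n : Finset (ℕ × ℕ)) ↦
    f (kl : ℕ × ℕ))
  convert h2 using 2 with n
  exact (Finset.sum_finset_coe _ _).symm

theorem hasse_formula (s : ℂ) (hs : 1 < s.re) :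
    riemannZeta s = (1 / (1 - 2 ^ (1 - s))) *
      ∑' n : ℕ, (1 / 2 ^ (n + 1) : ℂ) *
        ∑ k ∈ range (n + 1), (n.choose k : ℂ) * (-1) ^ k / ((k : ℂ) + 1) ^ s := by
  set σ := s.re
  set z : ℕ → ℂ := fun k ↦ 1 / ((k : ℂ) + 1) ^ s with hz
  set a : ℕ → ℂ := fun k ↦ (-1) ^ k / ((k : ℂ) + 1) ^ s with ha
  have hnormz : ∀ k : ℕ, ‖z k‖ = ((k : ℝ) + 1) ^ (-σ) := by
    intro k
    have hpos : (0 : ℝ) < (k : ℝ) + 1 := by positivity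
    simp only [hz, norm_div, norm_one]
    rw [show ((k : ℂ) + 1) = (((k : ℝ) + 1 : ℝ) : ℂ) by push_cast; ring,
      Complex.norm_cpow_eq_rpow_re_of_pos hpos,
      Real.rpow_neg hpos.le, one_div]
  have hnorma : ∀ k : ℕ, ‖a k‖ = ((k : ℝ) + 1) ^ (-σ) := by
    intro k
    have : ‖a k‖ = ‖z k‖ := by
      simp only [ha, hz, norm_div, norm_one, norm_pow, norm_neg, norm_one, one_pow]
    rw [this, hnormz]
  have hsummν : Summable (fun k : ℕ ↦ ((k : ℝ) + 1) ^ (-σ)) := by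
    have := (Real.summable_one_div_nat_rpow (p := σ)).mpr hs
    rw [← summable_nat_add_iff 1] at this
    refine this.congr fun k ↦ ?_
    push_cast
    rw [Real.rpow_neg (by positivity), one_div]
  -- double-sum family
  have h2 : ‖(1/2 : ℂ)‖ < 1 := by norm_num
  have h2r : ‖(1/2 : ℝ)‖ < 1 := by norm_num
  set F : ℕ × ℕ → ℂ := fun p ↦ ((p.2 + p.1).choose p.1 : ℂ) * (1/2) ^ (p.2 + p.1 + 1) * a p.1
    with hF
  have hrow : ∀ k : ℕ, HasSum (fun m ↦ F (k, m)) (a k) := by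
    intro k
    have h := (hasSum_choose_mul_geometric_of_norm_lt_one (𝕜 := ℂ) k h2).mul_right
      ((1/2) ^ (k + 1) * a k)
    have e1 : (fun m : ℕ ↦ (((m + k).choose k : ℂ) * (1/2) ^ m) * ((1/2) ^ (k + 1) * a k))
        = fun m ↦ F (k, m) := by
      funext m
      simp only [hF]
      rw [show m + k + 1 = m + (k + 1) by ring, pow_add]
      ring
    have e2 : (1 / (1 - (1/2 : ℂ)) ^ (k + 1)) * ((1/2) ^ (k + 1) * a k) = a k := by
      rw [show (1 - (1/2 : ℂ)) = 1/2 by norm_num]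
      have : ((1 : ℂ)/2) ^ (k+1) ≠ 0 := pow_ne_zero _ (by norm_num)
      field_simp
    rwa [e1, e2] at h
  have hrownorm : ∀ k : ℕ, HasSum (fun m ↦ ‖F (k, m)‖) (((k : ℝ) + 1) ^ (-σ)) := by
    intro k
    have h := (hasSum_choose_mul_geometric_of_norm_lt_one (𝕜 := ℝ) k h2r).mul_right
      ((1/2) ^ (k + 1) * ((k : ℝ) + 1) ^ (-σ))
    have e1 : (fun m : ℕ ↦ (((m + k).choose k : ℝ) * (1/2) ^ m)
        * ((1/2) ^ (k + 1) * ((k : ℝ) + 1) ^ (-σ))) = fun m ↦ ‖F (k, m)‖ := by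
      funext m
      simp only [hF, norm_mul, norm_pow, Complex.norm_natCast, hnorma]
      rw [show m + k + 1 = m + (k + 1) by ring, pow_add]
      norm_num
      ring
    have e2 : (1 / (1 - (1/2 : ℝ)) ^ (k + 1)) * ((1/2) ^ (k + 1) * ((k : ℝ) + 1) ^ (-σ))
        = ((k : ℝ) + 1) ^ (-σ) := by
      rw [show (1 - (1/2 : ℝ)) = 1/2 by norm_num]
      have : ((1 : ℝ)/2) ^ (k+1) ≠ 0 := by positivity
      field_simp
    rwa [e1, e2] at h
  have hFnorm : Summable (fun p : ℕ × ℕ ↦ ‖F p‖) := by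
    rw [summable_prod_of_nonneg (fun p ↦ norm_nonneg _)]
    exact ⟨fun k ↦ (hrownorm k).summable, hsummν.congr fun k ↦ ((hrownorm k).tsum_eq).symm⟩
  have hFsum : Summable F := hFnorm.of_norm
  -- order 1: rows
  have hη : ∑' p : ℕ × ℕ, F p = ∑' k, a k := by
    rw [Summable.tsum_prod' hFsum fun k ↦ (hrow k).summable]
    exact tsum_congr fun k ↦ (hrow k).tsum_eq
  -- order 2: diagonals
  have hdiag : HasSum (fun n : ℕ ↦ (1 / 2 ^ (n + 1) : ℂ) *
      ∑ k ∈ range (n + 1), (n.choose k : ℂ) * (-1) ^ k / ((k : ℂ) + 1) ^ s)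
      (∑' k, a k) := by
    rw [← hη]
    have e : ∀ n : ℕ, ∑ kl ∈ Finset.HasAntidiagonal.antidiagonal n, F kl = (1 / 2 ^ (n + 1) : ℂ) *
        ∑ k ∈ range (n + 1), (n.choose k : ℂ) * (-1) ^ k / ((k : ℂ) + 1) ^ s := by
      intro n
      rw [Finset.Nat.sum_antidiagonal_eq_sum_range_succ_mk, Finset.mul_sum]
      refine Finset.sum_congr rfl fun k hk ↦ ?_
      simp only [hF, ha]
      rw [Nat.sub_add_cancel (Nat.lt_succ_iff.mp (mem_range.mp hk))]
      rw [div_eq_mul_inv, div_eq_mul_inv, div_eq_mul_inv]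
      ring_nf
      simp only [one_div]; ring
    exact (funext e : _) ▸ my_hasSum_antidiagonal hFsum
  -- eta vs zeta
  have hzsumm : Summable z := by
    refine Summable.of_norm ?_
    simpa only [hnormz] using hsummν
  have hasumm : Summable a := by
    refine Summable.of_norm ?_
    simpa only [hnorma] using hsummν
  have hzodd : ∀ j : ℕ, z (2 * j + 1) = (1 / (2 : ℂ) ^ s) * z j := by
    intro j
    simp only [hz]
    rw [show ((2 * j + 1 : ℕ) : ℂ) + 1 = ((2 : ℝ) : ℂ) * ((((j : ℝ) + 1) : ℝ) : ℂ) by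
      push_cast; ring]
    rw [Complex.mul_cpow_ofReal_nonneg (by norm_num) (by positivity)]
    rw [show (((j : ℝ) + 1 : ℝ) : ℂ) = (j : ℂ) + 1 by push_cast; ring]
    rw [one_div, one_div, one_div, mul_inv]
    norm_num
  -- even/odd split
  have hinj2 : Function.Injective (fun k : ℕ ↦ 2 * k) := fun x y h ↦ by simp only at h; omega
  have hinj2' : Function.Injective (fun k : ℕ ↦ 2 * k + 1) := fun x y h ↦ by simp only at h; omega
  have hze : Summable (fun k ↦ z (2 * k)) := hzsumm.comp_injective hinj2
  have hzo : Summable (fun k ↦ z (2 * k + 1)) := hzsumm.comp_injective hinj2'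
  have hae : Summable (fun k ↦ a (2 * k)) := hasumm.comp_injective hinj2
  have hao : Summable (fun k ↦ a (2 * k + 1)) := hasumm.comp_injective hinj2'
  have h1 := tsum_even_add_odd hze hzo
  have h2 := tsum_even_add_odd hae hao
  have haeven : ∀ k : ℕ, a (2 * k) = z (2 * k) := by
    intro k; simp [ha, hz, pow_mul]
  have haodd : ∀ k : ℕ, a (2 * k + 1) = - z (2 * k + 1) := by
    intro k; simp [ha, hz, pow_add, pow_mul, neg_div]
  have hodd : ∑' k, z (2 * k + 1) = (1 / (2 : ℂ) ^ s) * ∑' k, z k := by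
    rw [tsum_congr hzodd, tsum_mul_left]
  have h2' : ∑' k, a k = (∑' k, z (2 * k)) - ∑' k, z (2 * k + 1) := by
    rw [← h2, tsum_congr haeven, tsum_congr haodd, tsum_neg]
    ring
  have hetaz : ∑' k, a k = (1 - 2 ^ (1 - s)) * ∑' k, z k := by
    have hc : (2 : ℂ) ^ (1 - s) = 2 * ((2 : ℂ) ^ s)⁻¹ := by
      rw [show (1 - s) = 1 + (-s) by ring, Complex.cpow_add _ _ two_ne_zero,
        Complex.cpow_one, Complex.cpow_neg]
    rw [h2', hc]
    have : ∑' k, z (2 * k) = (∑' k, z k) - ∑' k, z (2 * k + 1) := by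
      rw [← h1]; ring
    rw [this, hodd]
    ring
  -- nonvanishing
  have hcne : (1 : ℂ) - 2 ^ (1 - s) ≠ 0 := by
    intro h
    have he : (2 : ℂ) ^ (1 - s) = 1 := by linear_combination -h
    have hn : ‖(2 : ℂ) ^ (1 - s)‖ = 1 := by rw [he]; simp
    rw [show (2 : ℂ) = ((2 : ℝ) : ℂ) by norm_num, 
      Complex.norm_cpow_eq_rpow_re_of_pos two_pos] at hn
    have hlt : (2 : ℝ) ^ ((1 - s).re) < 1 :=
      Real.rpow_lt_one_of_one_lt_of_neg one_lt_two
        (by simp only [Complex.sub_re, Complex.one_re]; linarith)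
    rw [hn] at hlt
    exact lt_irrefl _ hlt
  -- final
  have hzeta : riemannZeta s = ∑' k, z k := by
    rw [zeta_eq_tsum_one_div_nat_add_one_cpow hs]
  rw [hdiag.tsum_eq, hetaz, ← hzeta, one_div, inv_mul_cancel_left₀ hcne]
end

section
/- For Re s > 1, ζ(s) = ∑_{n=0}^∞ (1/2^{n+1}) ∑_{k=0}^n C(n,k) 1/(k+1)^s. -/
open Finset

lemma hasSum_choose_div_two_pow (k : ℕ) :
    HasSum (fun n : ℕ => (n.choose k : ℝ) / 2 ^ (n + 1)) 1 := by
  have hr : ‖(1/2 : ℝ)‖ < 1 := by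
    rw [Real.norm_eq_abs, abs_of_pos (by norm_num : (0:ℝ) < 1/2)]; norm_num
  have h := (hasSum_choose_mul_geometric_of_norm_lt_one k hr).mul_left ((1/2 : ℝ) ^ (k + 1))
  have hinj : Function.Injective (fun m : ℕ => m + k) := add_left_injective k
  have hvan : ∀ n ∉ Set.range (fun m : ℕ => m + k),
      (n.choose k : ℝ) / 2 ^ (n + 1) = 0 := by
    intro n hn
    have hnk : n < k := by
      by_contra h'
      exact hn ⟨n - k, show n - k + k = n by omega⟩
    rw [Nat.choose_eq_zero_of_lt hnk]
    simp
  rw [← Function.Injective.hasSum_iff hinj hvan]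
  convert h using 1
  · rfl
  · funext m
    show (((m + k).choose k : ℝ)) / 2 ^ (m + k + 1)
        = (1/2:ℝ)^(k+1) * ((m + k).choose k * (1/2)^m)
    rw [div_pow, div_pow, one_pow, one_pow]
    rw [show m + k + 1 = (k+1) + m by omega, pow_add]
    field_simp
  · norm_num

lemma hasSum_choose_div_two_pow_complex (k : ℕ) :
    HasSum (fun n : ℕ => (n.choose k : ℂ) / 2 ^ (n + 1)) 1 := by
  have h := (hasSum_choose_div_two_pow k).mapL Complex.ofRealCLM
  simpa using h

private noncomputable def zetaF (s : ℂ) : ℕ × ℕ → ℂ :=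
  fun p => (p.1.choose p.2 : ℂ) / 2 ^ (p.1 + 1) / ((p.2 : ℂ) + 1) ^ s

private lemma zetaF_norm (s : ℂ) (p : ℕ × ℕ) : ‖zetaF s p‖ =
    (p.1.choose p.2 : ℝ) / 2 ^ (p.1 + 1) / ((p.2 : ℝ) + 1) ^ s.re := by
  obtain ⟨n, k⟩ := p
  have hk : (0 : ℝ) < (k : ℝ) + 1 := by positivity
  simp only [zetaF, norm_div]
  congr 1
  · simp [Complex.norm_natCast]
  · rw [show ((k : ℂ) + 1) = ((((k : ℝ) + 1) : ℝ) : ℂ) by push_cast; ring,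
      Complex.norm_cpow_eq_rpow_re_of_pos hk]

private lemma zetaF_summable (s : ℂ) (hs : 1 < s.re) : Summable (zetaF s) := by
  have hF : Summable fun q : ℕ × ℕ =>
      (q.2.choose q.1 : ℝ) / 2 ^ (q.2 + 1) / ((q.1 : ℝ) + 1) ^ s.re := by
    rw [summable_prod_of_nonneg (fun q => by positivity)]
    constructor
    · intro k
      show Summable fun n : ℕ => (n.choose k : ℝ) / 2 ^ (n + 1) / ((k : ℝ) + 1) ^ s.re
      exact ((hasSum_choose_div_two_pow k).summable).div_const _
    · show Summable fun k : ℕ =>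
        ∑' n : ℕ, (n.choose k : ℝ) / 2 ^ (n + 1) / ((k : ℝ) + 1) ^ s.re
      have hrow : ∀ k : ℕ, (∑' n : ℕ, (n.choose k : ℝ) / 2 ^ (n + 1) / ((k : ℝ) + 1) ^ s.re)
          = 1 / ((k : ℝ) + 1) ^ s.re := by
        intro k
        rw [tsum_div_const, (hasSum_choose_div_two_pow k).tsum_eq]
      simp only [hrow]
      have h1 := (Real.summable_one_div_nat_rpow (p := s.re)).2 (by linarith)
      have h2 := h1.comp_injective Nat.succ_injective
      refine h2.congr fun k => ?_
      simp [Nat.succ_eq_add_one]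
  apply Summable.of_norm
  have h3 := ((Equiv.prodComm ℕ ℕ).summable_iff).2 hF
  refine h3.congr fun p => ?_
  rw [zetaF_norm s p]
  rfl

theorem zeta_euler_transform (s : ℂ) (hs : 1 < s.re) :
    riemannZeta s = ∑' n : ℕ, (1 / 2 ^ (n + 1) : ℂ) *
        ∑ k ∈ range (n + 1), (n.choose k : ℂ) / ((k : ℂ) + 1) ^ s := by
  have hcol : ∀ k : ℕ, HasSum (fun n => zetaF s (n, k)) (1 / ((k : ℂ) + 1) ^ s) := by
    intro k
    have h := (hasSum_choose_div_two_pow_complex k).div_const (((k : ℂ) + 1) ^ s)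
    simpa [zetaF] using h
  have hrow : ∀ n : ℕ, (∑' k : ℕ, zetaF s (n, k)) =
      (1 / 2 ^ (n + 1) : ℂ) * ∑ k ∈ range (n + 1), (n.choose k : ℂ) / ((k : ℂ) + 1) ^ s := by
    intro n
    rw [tsum_eq_sum (s := range (n + 1)) (by
      intro k hk
      have hnk : n < k := by simpa using hk
      simp [zetaF, Nat.choose_eq_zero_of_lt hnk])]
    rw [mul_sum]
    refine Finset.sum_congr rfl fun k _ => ?_
    simp only [zetaF]
    ring
  calc riemannZeta s = ∑' k : ℕ, 1 / ((k : ℂ) + 1) ^ s :=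
        zeta_eq_tsum_one_div_nat_add_one_cpow hs
    _ = ∑' (k : ℕ) (n : ℕ), zetaF s (n, k) := by
        refine tsum_congr fun k => ?_
        rw [(hcol k).tsum_eq]
    _ = ∑' (n : ℕ) (k : ℕ), zetaF s (n, k) := Summable.tsum_comm (zetaF_summable s hs)
    _ = ∑' n : ℕ, (1 / 2 ^ (n + 1) : ℂ) *
        ∑ k ∈ range (n + 1), (n.choose k : ℂ) / ((k : ℂ) + 1) ^ s :=
        tsum_congr hrow
end

section
/- For all real x and μ with 0 < μ ≤ 1, e^{-x} = ∑_{n=0}^∞ (μ^n/(μ+1)^{n+1}) L_n(x/μ), where L_n denotes the n-th Laguerre polynomial. -/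
open Finset

/-- The `n`-th Laguerre polynomial as a function. -/
noncomputable def laguerre (n : ℕ) (x : ℝ) : ℝ :=
  ∑ k ∈ range (n + 1), (n.choose k : ℝ) * (-x) ^ k / (Nat.factorial k)

/-- inner slice sum -/
lemma laguerre_slice_hasSum {t : ℝ} (ht0 : 0 ≤ t) (ht1 : t < 1) (c : ℝ) (k : ℕ) :
    HasSum (fun m : ℕ => ((k + m).choose k : ℝ) * c * t ^ (k + m))
      (c * t ^ k / (1 - t) ^ (k + 1)) := by
  have h : ‖t‖ < 1 := by rwa [Real.norm_eq_abs, abs_of_nonneg ht0]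
  have H := (hasSum_choose_mul_geometric_of_norm_lt_one (𝕜 := ℝ) k h).mul_left (c * t ^ k)
  have hval : c * t ^ k / (1 - t) ^ (k + 1) = c * t ^ k * (1 / (1 - t) ^ (k + 1)) := by ring
  have hfun : (fun m : ℕ => ((k + m).choose k : ℝ) * c * t ^ (k + m))
      = fun i : ℕ => c * t ^ k * (((i + k).choose k : ℝ) * t ^ i) := by
    funext m; rw [Nat.add_comm k m]; ring
  rw [hval, hfun]
  exact H

lemma real_exp_hasSum (z : ℝ) : HasSum (fun n : ℕ => z ^ n / n.factorial) (Real.exp z) := by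
  have := NormedSpace.expSeries_div_hasSum_exp z
  rwa [← Real.exp_eq_exp_ℝ] at this

set_option maxHeartbeats 2000000 in
theorem exp_neg_laguerre_param (x μ : ℝ) (hμ0 : 0 < μ) (hμ1 : μ ≤ 1) :
    Real.exp (-x) = ∑' n : ℕ, μ ^ n / (μ + 1) ^ (n + 1) * laguerre n (x / μ) := by
  have hμ1p : (0 : ℝ) < μ + 1 := by linarith
  set t : ℝ := μ / (μ + 1) with ht_def
  have ht0 : 0 ≤ t := div_nonneg hμ0.le hμ1p.le
  have ht1 : t < 1 := (div_lt_one hμ1p).mpr (lt_add_one μ)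
  have h1t : 1 - t = (μ + 1)⁻¹ := by
    rw [ht_def]; field_simp; ring
  set y : ℝ := x / μ with hy_def
  have hyx : μ * y = x := by rw [hy_def]; field_simp
  -- the double-indexed family
  set F : ℕ × ℕ → ℝ :=
    fun p => ((p.1 + p.2).choose p.1 : ℝ) * ((-y) ^ p.1 / p.1.factorial) * t ^ (p.1 + p.2)
    with hF_def
  -- slice sums
  have slice_val : ∀ (z : ℝ) (k : ℕ),
      (z ^ k / (k.factorial : ℝ)) * t ^ k / (1 - t) ^ (k + 1)
        = (μ + 1) * ((z * μ) ^ k / k.factorial) := by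
    intro z k
    rw [h1t, ht_def]
    have hne : (μ + 1) ≠ 0 := hμ1p.ne'
    have hfk : (k.factorial : ℝ) ≠ 0 := Nat.cast_ne_zero.mpr k.factorial_ne_zero
    rw [div_pow, inv_pow]
    field_simp
    ring
  have slice : ∀ k : ℕ, HasSum (fun m : ℕ => F (k, m))
      ((μ + 1) * ((-y * μ) ^ k / k.factorial)) := by
    intro k
    have := laguerre_slice_hasSum ht0 ht1 ((-y) ^ k / k.factorial) k
    rwa [slice_val (-y) k] at this
  -- summability of F in norm
  have hnormF : ∀ p : ℕ × ℕ, ‖F p‖ =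
      ((p.1 + p.2).choose p.1 : ℝ) * (|y| ^ p.1 / p.1.factorial) * t ^ (p.1 + p.2) := by
    intro p
    rw [hF_def]
    simp only [Real.norm_eq_abs, abs_mul, abs_div, abs_pow, abs_neg]
    rw [abs_of_nonneg (by positivity : (0:ℝ) ≤ ((p.1 + p.2).choose p.1 : ℝ)),
      abs_of_nonneg (by positivity : (0:ℝ) ≤ t),
      abs_of_nonneg (Nat.cast_nonneg _ : (0:ℝ) ≤ (p.1.factorial : ℝ))]
  have hFsummable : Summable F := by
    apply Summable.of_norm
    rw [show (fun p => ‖F p‖) = fun p : ℕ × ℕ =>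
        ((p.1 + p.2).choose p.1 : ℝ) * (|y| ^ p.1 / p.1.factorial) * t ^ (p.1 + p.2)
      from funext hnormF]
    apply (summable_prod_of_nonneg ?_).mpr ⟨?_, ?_⟩
    · intro p; positivity
    · intro k
      exact (laguerre_slice_hasSum ht0 ht1 (|y| ^ k / k.factorial) k).summable
    · apply Summable.congr (((real_exp_hasSum (|y| * μ)).summable).mul_left (μ + 1))
      intro k
      rw [(laguerre_slice_hasSum ht0 ht1 (|y| ^ k / k.factorial) k).tsum_eq,
        slice_val (|y|) k]
  -- total sum via fibers: equals (μ+1) * exp (-x)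
  have hker : HasSum F ((μ + 1) * Real.exp (-x)) := by
    have htotal : HasSum F (∑' p, F p) := hFsummable.hasSum
    have hfib : HasSum (fun k : ℕ => (μ + 1) * ((-y * μ) ^ k / k.factorial)) (∑' p, F p) :=
      htotal.prod_fiberwise slice
    have hexp : HasSum (fun k : ℕ => (μ + 1) * ((-y * μ) ^ k / k.factorial))
        ((μ + 1) * Real.exp (-x)) := by
      have := (real_exp_hasSum (-x)).mul_left (μ + 1)
      convert this using 2 with k
      · rfl
      rw [show -y * μ = -x by rw [← hyx]; ring]
    rwa [hfib.unique hexp] at htotal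
  -- regroup along antidiagonals
  have hsig : HasSum (fun s : Σ n : ℕ, (Finset.HasAntidiagonal.antidiagonal n : Finset (ℕ × ℕ)) => F s.2)
      ((μ + 1) * Real.exp (-x)) :=
    (Finset.HasAntidiagonal.sigmaAntidiagonalEquivProd.hasSum_iff).mpr hker
  have hrow : HasSum (fun n : ℕ => ∑ p ∈ Finset.HasAntidiagonal.antidiagonal n, F p)
      ((μ + 1) * Real.exp (-x)) := by
    apply hsig.sigma
    intro n
    exact (Finset.HasAntidiagonal.antidiagonal n).hasSum F
  -- rows are t^n * laguerre n y
  have hrow_eq : ∀ n : ℕ, ∑ p ∈ Finset.HasAntidiagonal.antidiagonal n, F p = t ^ n * laguerre n y := by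
    intro n
    rw [Finset.Nat.sum_antidiagonal_eq_sum_range_succ_mk, laguerre, Finset.mul_sum]
    apply Finset.sum_congr rfl
    intro k hk
    rw [Finset.mem_range] at hk
    have hkn : k + (n - k) = n := by omega
    simp only [hF_def, hkn]
    ring
  have hlag : HasSum (fun n : ℕ => t ^ n * laguerre n y) ((μ + 1) * Real.exp (-x)) := by
    rwa [show (fun n : ℕ => t ^ n * laguerre n y)
      = fun n : ℕ => ∑ p ∈ Finset.HasAntidiagonal.antidiagonal n, F p from funext fun n => (hrow_eq n).symm]
  -- finish
  have hfinal : HasSum (fun n : ℕ => μ ^ n / (μ + 1) ^ (n + 1) * laguerre n y)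
      (Real.exp (-x)) := by
    have h := hlag.mul_left ((μ + 1)⁻¹)
    have hval : (μ + 1)⁻¹ * ((μ + 1) * Real.exp (-x)) = Real.exp (-x) := by
      field_simp
    rw [hval] at h
    have hterm : (fun n : ℕ => μ ^ n / (μ + 1) ^ (n + 1) * laguerre n y)
        = fun n : ℕ => (μ + 1)⁻¹ * (t ^ n * laguerre n y) := by
      funext n
      rw [ht_def, div_pow, pow_succ, ← div_div, div_eq_inv_mul (μ ^ n / (μ + 1) ^ n) (μ + 1),
        mul_assoc]
    rwa [hterm]
  exact hfinal.tsum_eq.symm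
end

section
/- For all x ∈ ℝ, e^{-x} = ∑_{n=0}^∞ (1/2^{n+1}) L_n(x), where L_n is the n-th Laguerre polynomial. -/
open Finset

theorem exp_neg_laguerre (x : ℝ) :
    Real.exp (-x) = ∑' n : ℕ, (1 / 2 ^ (n + 1) : ℝ) * laguerre n x := by
  have hr : ‖(1/2 : ℝ)‖ < 1 := by norm_num [Real.norm_eq_abs]
  -- f indexed by (k, m), n = k + m
  set f : ℕ × ℕ → ℝ := fun p =>
    ((p.2 + p.1).choose p.1 : ℝ) * (1/2) ^ (p.1 + p.2 + 1) * ((-x) ^ p.1 / (Nat.factorial p.1))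
    with hf_def
  -- inner hasSum for each k
  have hrow : ∀ k : ℕ, HasSum (fun m => f (k, m)) ((-x) ^ k / (Nat.factorial k)) := by
    intro k
    have h := (hasSum_choose_mul_geometric_of_norm_lt_one (𝕜 := ℝ) k hr).mul_right
      ((1/2 : ℝ) ^ (k + 1) * ((-x) ^ k / (Nat.factorial k)))
    have : (1 / (1 - 1/2 : ℝ) ^ (k + 1)) * ((1/2 : ℝ) ^ (k + 1) * ((-x) ^ k / (Nat.factorial k)))
        = (-x) ^ k / (Nat.factorial k) := by
      rw [show (1 - 1/2 : ℝ) = 1/2 by norm_num]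
      field_simp
    rw [this] at h
    convert h using 2 with m
    · rfl
    rw [hf_def]
    simp only
    rw [show k + m + 1 = m + (k + 1) by ring, pow_add]
    ring
  have habs : Summable fun p : ℕ × ℕ => |f p| := by
    apply summable_prod_of_nonneg (fun p => abs_nonneg _) |>.mpr
    constructor
    · intro k
      exact ((hrow k).summable).abs
    · have hb : ∀ k : ℕ, (∑' m, |f (k, m)|) = |x| ^ k / (Nat.factorial k) := by
        intro k
        have : ∀ m : ℕ, |f (k, m)| = ((m + k).choose k : ℝ) * (1/2) ^ (k + m + 1)
            * (|x| ^ k / (Nat.factorial k)) := by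
          intro m
          rw [hf_def]
          simp only [abs_mul, abs_div, abs_pow, abs_neg, Nat.abs_cast]
          norm_num
        -- same computation as hrow with |x|
        have h := (hasSum_choose_mul_geometric_of_norm_lt_one (𝕜 := ℝ) k hr).mul_right
          ((1/2 : ℝ) ^ (k + 1) * (|x| ^ k / (Nat.factorial k)))
        have heq : (1 / (1 - 1/2 : ℝ) ^ (k + 1)) * ((1/2 : ℝ) ^ (k + 1) * (|x| ^ k / (Nat.factorial k)))
            = |x| ^ k / (Nat.factorial k) := by
          rw [show (1 - 1/2 : ℝ) = 1/2 by norm_num]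
          field_simp
        rw [heq] at h
        rw [tsum_congr this]
        refine HasSum.tsum_eq ?_
        convert h using 2 with m
        · rfl
        rw [show k + m + 1 = m + (k + 1) by ring, pow_add]
        ring
      rw [funext hb]
      exact (Real.summable_pow_div_factorial |x|)
  have hf : Summable f := summable_abs_iff.mp habs
  -- g indexed by (n, k)
  set g : ℕ × ℕ → ℝ := fun q =>
    if q.2 ≤ q.1 then (1/2 : ℝ) ^ (q.1 + 1) * ((q.1.choose q.2 : ℝ) * (-x) ^ q.2 / (Nat.factorial q.2))
    else 0 with hg_def
  set i : ℕ × ℕ → ℕ × ℕ := fun p => (p.1 + p.2, p.1) with hi_def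
  have hinj : Function.Injective i := by
    intro p q h
    simp only [hi_def, Prod.mk.injEq] at h
    obtain ⟨h1, h2⟩ := h
    exact Prod.ext h2 (by omega)
  have hsupp : ∀ q ∉ Set.range i, g q = 0 := by
    intro q hq
    rw [hg_def]
    simp only
    rw [if_neg]
    intro hle
    exact hq ⟨(q.2, q.1 - q.2), Prod.ext (by show q.2 + (q.1 - q.2) = q.1; omega) rfl⟩
  have hcomp : g ∘ i = f := by
    funext p
    simp only [hg_def, hi_def, hf_def, Function.comp_apply]
    rw [if_pos (Nat.le_add_right _ _), Nat.add_comm p.1 p.2]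
    ring
  have hsupp' : Function.support g ⊆ Set.range i := fun q hq => by
    by_contra h
    exact hq (hsupp q h)
  have hg : Summable g := (hinj.summable_iff hsupp).mp (hcomp ▸ hf)
  have htsum_eq : ∑' p, f p = ∑' q, g q := by
    rw [← hcomp]
    exact hinj.tsum_eq hsupp'
  -- compute LHS
  have hlhs : Real.exp (-x) = ∑' p, f p := by
    rw [Summable.tsum_prod' hf (fun k => (hrow k).summable)]
    have : ∀ k : ℕ, (∑' m, f (k, m)) = (-x) ^ k / (Nat.factorial k) := fun k => (hrow k).tsum_eq
    rw [tsum_congr this, Real.exp_eq_exp_ℝ, NormedSpace.exp_eq_tsum_div]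
  -- compute RHS
  have hrhs : ∑' q, g q = ∑' n : ℕ, (1 / 2 ^ (n + 1) : ℝ) * laguerre n x := by
    rw [Summable.tsum_prod' hg (fun n => summable_of_ne_finset_zero (s := range (n + 1))
      (fun k hk => by rw [hg_def]; simp only; rw [if_neg (by simp at hk; omega)]))]
    congr 1
    funext n
    have hfin : ∑' k, g (n, k) = ∑ k ∈ range (n + 1), g (n, k) := by
      apply tsum_eq_sum
      intro k hk
      rw [hg_def]
      simp only
      rw [if_neg (by simp at hk; omega)]
    rw [hfin, laguerre, Finset.mul_sum]
    apply Finset.sum_congr rfl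
    intro k hk
    rw [hg_def]
    simp only
    rw [if_pos (by simp at hk; omega)]
    rw [one_div, inv_pow, ← one_div]
  rw [hlhs, htsum_eq, hrhs]
end

section
/- π = ∑_{n=1}^∞ (μ^n/(μ+1)^{n+1}) ∑_{k=1}^n C(n,k) (1/μ^k)((3^k-1)/4^k) ζ(k+1) for μ with 0 < μ ≤ 1 (Amore's formula). -/
open Finset Filter Topology

/-- Leibniz's series for `π`, grouped in consecutive pairs. -/
lemma amore_leibniz :
    HasSum (fun m : ℕ => 1 / (4 * (m : ℝ) + 1) - 1 / (4 * (m : ℝ) + 3)) (Real.pi / 4) := by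
  have h0 : ∀ m : ℕ, (0:ℝ) ≤ 1 / (4 * (m:ℝ) + 1) - 1 / (4 * (m:ℝ) + 3) := by
    intro m
    rw [sub_nonneg]
    apply one_div_le_one_div_of_le
    · positivity
    · linarith
  rw [hasSum_iff_tendsto_nat_of_nonneg h0]
  have key : ∀ K : ℕ, ∑ m ∈ range K, (1 / (4 * (m:ℝ) + 1) - 1 / (4 * (m:ℝ) + 3))
      = ∑ i ∈ range (2 * K), (-1 : ℝ) ^ i / (2 * i + 1) := by
    intro K
    induction K with
    | zero => simp
    | succ K ih =>
      have h2 : 2 * (K + 1) = (2 * K) + 1 + 1 := by ring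
      have e1 : (-1 : ℝ) ^ (2 * K) = 1 := by
        rw [pow_mul]; norm_num
      have e2 : (-1 : ℝ) ^ (2 * K + 1) = -1 := by
        rw [pow_succ, e1]; norm_num
      rw [Finset.sum_range_succ, ih, h2, Finset.sum_range_succ, Finset.sum_range_succ, e1, e2]
      push_cast
      ring
  have h2 : Tendsto (fun K : ℕ => 2 * K) atTop atTop :=
    tendsto_atTop_atTop_of_monotone (fun a b h => by omega) (fun b => ⟨b, by omega⟩)
  exact (Real.tendsto_sum_pi_div_four.comp h2).congr (fun K => (key K).symm)

/-- The shifted `p`-series is summable. -/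
lemma amore_summable_aux (k : ℕ) (hk : 1 ≤ k) :
    Summable (fun m : ℕ => 1 / ((m : ℝ) + 1) ^ (k + 1)) := by
  have h : Summable (fun n : ℕ => 1 / (n : ℝ) ^ (k + 1)) :=
    Real.summable_one_div_nat_pow.mpr (by omega)
  have := (summable_nat_add_iff 1).mpr h
  refine this.congr fun m => ?_
  push_cast
  ring_nf

/-- Zeta values at integers `≥ 2` as real sums. -/
lemma amore_zeta (k : ℕ) (hk : 1 ≤ k) :
    riemannZeta ((k : ℂ) + 1) = ((∑' m : ℕ, 1 / ((m : ℝ) + 1) ^ (k + 1) : ℝ) : ℂ) := by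
  have h : 1 < ((k : ℂ) + 1).re := by
    simp only [Complex.add_re, Complex.natCast_re, Complex.one_re]
    exact_mod_cast by omega
  rw [zeta_eq_tsum_one_div_nat_add_one_cpow h, Complex.ofReal_tsum]
  refine tsum_congr fun m => ?_
  have : ((k : ℂ) + 1) = ((k + 1 : ℕ) : ℂ) := by push_cast; ring
  rw [this, Complex.cpow_natCast]
  push_cast
  ring

/-- Binomial sums starting at `k = 1`. -/
lemma amore_binom (x : ℝ) (N : ℕ) :
    ∑ k ∈ Icc 1 N, (N.choose k : ℝ) * x ^ k = (1 + x) ^ N - 1 := by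
  have h : (x + 1) ^ N = ∑ k ∈ range (N + 1), x ^ k * 1 ^ (N - k) * (N.choose k : ℝ) :=
    add_pow x 1 N
  have hins : range (N + 1) = insert 0 (Icc 1 N) := by
    ext a
    simp only [Finset.mem_range, Finset.mem_insert, Finset.mem_Icc]
    omega
  rw [hins, Finset.sum_insert (by simp)] at h
  simp only [one_pow, mul_one, pow_zero, one_mul, Nat.choose_zero_right, Nat.cast_one] at h
  have : ∑ k ∈ Icc 1 N, (N.choose k : ℝ) * x ^ k = ∑ k ∈ Icc 1 N, x ^ k * (N.choose k : ℝ) :=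
    Finset.sum_congr rfl fun k _ => by ring
  rw [this]
  rw [show (1:ℝ) + x = x + 1 by ring, h]
  ring

/-- The summand of the double series. -/
noncomputable def amoreG (μ : ℝ) (n m : ℕ) : ℝ :=
  μ ^ (n + 1) / (μ + 1) ^ (n + 2) *
    (((1 + 3 / (4 * μ * ((m : ℝ) + 1))) ^ (n + 1)
      - (1 + 1 / (4 * μ * ((m : ℝ) + 1))) ^ (n + 1)) / ((m : ℝ) + 1))

lemma amore_nonneg (μ : ℝ) (hμ0 : 0 < μ) (n m : ℕ) : 0 ≤ amoreG μ n m := by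
  have hm : (0:ℝ) < (m : ℝ) + 1 := by positivity
  have h1 : (0:ℝ) ≤ 1 + 1 / (4 * μ * ((m : ℝ) + 1)) := by positivity
  have h2 : 1 + 1 / (4 * μ * ((m : ℝ) + 1)) ≤ 1 + 3 / (4 * μ * ((m : ℝ) + 1)) := by
    have : (0:ℝ) < 4 * μ * ((m : ℝ) + 1) := by positivity
    gcongr
    norm_num
  have := pow_le_pow_left₀ h1 h2 (n + 1)
  unfold amoreG
  have hpre : (0:ℝ) ≤ μ ^ (n + 1) / (μ + 1) ^ (n + 2) := by positivity
  exact mul_nonneg hpre (div_nonneg (by linarith) (by linarith))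

/-- The sum over `n` for fixed `m` (geometric series). -/
lemma amore_geom (μ : ℝ) (hμ0 : 0 < μ) (m : ℕ) :
    HasSum (fun n : ℕ => amoreG μ n m)
      (4 * (1 / (4 * (m : ℝ) + 1) - 1 / (4 * (m : ℝ) + 3))) := by
  have hm0 : (0:ℝ) < (m : ℝ) + 1 := by positivity
  set m' : ℝ := (m : ℝ) + 1 with hm'
  have hμ1 : (0:ℝ) < μ + 1 := by linarith
  set r3 : ℝ := (μ + 3 / (4 * m')) / (μ + 1) with hr3def
  set r1 : ℝ := (μ + 1 / (4 * m')) / (μ + 1) with hr1def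
  have hone : (1:ℝ) ≤ m' := by rw [hm']; simp
  have h4m : (0:ℝ) < 4 * m' := by linarith
  have h34 : 3 / (4 * m') < 1 := by rw [div_lt_one h4m]; linarith
  have h14 : 1 / (4 * m') < 1 := by rw [div_lt_one h4m]; linarith
  have h34nn : 0 < 3 / (4 * m') := by positivity
  have h14nn : 0 < 1 / (4 * m') := by positivity
  have hr3nn : 0 ≤ r3 := by rw [hr3def]; positivity
  have hr1nn : 0 ≤ r1 := by rw [hr1def]; positivity
  have hr3lt : r3 < 1 := by rw [hr3def, div_lt_one hμ1]; linarith
  have hr1lt : r1 < 1 := by rw [hr1def, div_lt_one hμ1]; linarith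
  have h3 : HasSum (fun n : ℕ => r3 * r3 ^ n) (r3 * (1 - r3)⁻¹) :=
    (hasSum_geometric_of_lt_one hr3nn hr3lt).mul_left r3
  have h1 : HasSum (fun n : ℕ => r1 * r1 ^ n) (r1 * (1 - r1)⁻¹) :=
    (hasSum_geometric_of_lt_one hr1nn hr1lt).mul_left r1
  have H := (h3.sub h1).mul_right (1 / ((μ + 1) * m'))
  have hμne : μ ≠ 0 := ne_of_gt hμ0
  have hm'ne : m' ≠ 0 := ne_of_gt (by linarith)
  have hμ1ne : μ + 1 ≠ 0 := ne_of_gt hμ1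
  have e3 : r3 = μ * (1 + 3 / (4 * μ * m')) / (μ + 1) := by
    rw [hr3def]; field_simp
  have e1 : r1 = μ * (1 + 1 / (4 * μ * m')) / (μ + 1) := by
    rw [hr1def]; field_simp
  have hfun : (fun n : ℕ => (r3 * r3 ^ n - r1 * r1 ^ n) * (1 / ((μ + 1) * m')))
      = fun n : ℕ => amoreG μ n m := by
    funext n
    simp only [amoreG, ← hm']
    rw [← pow_succ', ← pow_succ', e3, e1, div_pow, div_pow, mul_pow, mul_pow,
      pow_succ (μ + 1) (n + 1)]
    field_simp
  rw [hfun] at H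
  suffices hv : 4 * (1 / (4 * (m : ℝ) + 1) - 1 / (4 * (m : ℝ) + 3)) = (r3 * (1 - r3)⁻¹ - r1 * (1 - r1)⁻¹) * (1 / ((μ + 1) * m')) by rw [hv]; exact H
  have hcast : (0:ℝ) ≤ (m:ℝ) := Nat.cast_nonneg m
  have hd3 : 4 * m' - 3 ≠ 0 := by rw [hm']; intro h; linarith
  have hd1 : 4 * m' - 1 ≠ 0 := by rw [hm']; intro h; linarith
  have d3 : 1 - r3 = (4 * m' - 3) / (4 * m' * (μ + 1)) := by
    rw [hr3def]; field_simp; ring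
  have d1 : 1 - r1 = (4 * m' - 1) / (4 * m' * (μ + 1)) := by
    rw [hr1def]; field_simp; ring
  rw [d3, d1, inv_div, inv_div, hr3def, hr1def]
  have hmm : (m:ℝ) + 1 ≠ 0 := ne_of_gt hm0
  have hq1 : 4 * ((m:ℝ) + 1) - 3 ≠ 0 := by intro h; linarith
  have hq2 : 4 * ((m:ℝ) + 1) - 1 ≠ 0 := by intro h; linarith
  have hq3 : 4 * (m:ℝ) + 1 ≠ 0 := by positivity
  have hq4 : 4 * (m:ℝ) + 3 ≠ 0 := by positivity
  simp only [hm']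
  field_simp
  ring

/-- The sum over `m` for fixed `n`. -/
lemma amore_inner (μ : ℝ) (hμ0 : 0 < μ) (n : ℕ) :
    HasSum (fun m : ℕ => amoreG μ n m)
      (μ ^ (n + 1) / (μ + 1) ^ (n + 2) *
        ∑ k ∈ Icc 1 (n + 1), (Nat.choose (n + 1) k : ℝ) * (1 / μ ^ k) *
          ((3 ^ k - 1) / 4 ^ k) * (∑' m : ℕ, 1 / ((m : ℝ) + 1) ^ (k + 1))) := by
  have hμne : μ ≠ 0 := ne_of_gt hμ0
  have H : HasSum
      (fun m : ℕ => ∑ k ∈ Icc 1 (n + 1),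
        ((Nat.choose (n + 1) k : ℝ) * (1 / μ ^ k) * ((3 ^ k - 1) / 4 ^ k)) *
          (1 / ((m : ℝ) + 1) ^ (k + 1)))
      (∑ k ∈ Icc 1 (n + 1),
        ((Nat.choose (n + 1) k : ℝ) * (1 / μ ^ k) * ((3 ^ k - 1) / 4 ^ k)) *
          (∑' m : ℕ, 1 / ((m : ℝ) + 1) ^ (k + 1))) := by
    refine hasSum_sum fun k hk => ?_
    exact (amore_summable_aux k (Finset.mem_Icc.1 hk).1).hasSum.mul_left _
  have H2 := H.mul_left (μ ^ (n + 1) / (μ + 1) ^ (n + 2))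
  have hfun : (fun m : ℕ => μ ^ (n + 1) / (μ + 1) ^ (n + 2) *
      ∑ k ∈ Icc 1 (n + 1),
        ((Nat.choose (n + 1) k : ℝ) * (1 / μ ^ k) * ((3 ^ k - 1) / 4 ^ k)) *
          (1 / ((m : ℝ) + 1) ^ (k + 1))) = fun m : ℕ => amoreG μ n m := by
    funext m
    have hm0 : (0:ℝ) < (m : ℝ) + 1 := by positivity
    have hmne : ((m : ℝ) + 1) ≠ 0 := ne_of_gt hm0
    have step : ∑ k ∈ Icc 1 (n + 1),
        ((Nat.choose (n + 1) k : ℝ) * (1 / μ ^ k) * ((3 ^ k - 1) / 4 ^ k)) *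
          (1 / ((m : ℝ) + 1) ^ (k + 1))
        = (∑ k ∈ Icc 1 (n + 1),
            (Nat.choose (n + 1) k : ℝ) * (3 / (4 * μ * ((m : ℝ) + 1))) ^ k
          - ∑ k ∈ Icc 1 (n + 1),
            (Nat.choose (n + 1) k : ℝ) * (1 / (4 * μ * ((m : ℝ) + 1))) ^ k)
          / ((m : ℝ) + 1) := by
      rw [← Finset.sum_sub_distrib, Finset.sum_div]
      refine Finset.sum_congr rfl fun k hk => ?_
      simp only [div_pow, mul_pow, one_pow]
      field_simp
      ring
    rw [step, amore_binom, amore_binom]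
    simp only [amoreG]
    ring
  rw [hfun] at H2
  exact H2

/-- The real version of Amore's formula. -/
lemma amore_real (μ : ℝ) (hμ0 : 0 < μ) :
    Real.pi = ∑' n : ℕ, μ ^ (n + 1) / (μ + 1) ^ (n + 2) *
      ∑ k ∈ Icc 1 (n + 1), (Nat.choose (n + 1) k : ℝ) * (1 / μ ^ k) *
        ((3 ^ k - 1) / 4 ^ k) * (∑' m : ℕ, 1 / ((m : ℝ) + 1) ^ (k + 1)) := by
  have hgeom := amore_geom μ hμ0
  have hsummAll : Summable (Function.uncurry fun m n : ℕ => amoreG μ n m) := by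
    have hnn : 0 ≤ Function.uncurry fun m n : ℕ => amoreG μ n m :=
      fun p => amore_nonneg μ hμ0 p.2 p.1
    rw [summable_prod_of_nonneg hnn]
    constructor
    · exact fun m => (hgeom m).summable
    · refine ((amore_leibniz.mul_left 4).summable).congr fun m => ?_
      exact ((hgeom m).tsum_eq).symm
  have hcomm := Summable.tsum_comm (f := fun m n : ℕ => amoreG μ n m) hsummAll
  calc Real.pi = 4 * (Real.pi / 4) := by ring
    _ = ∑' m : ℕ, 4 * (1 / (4 * (m:ℝ) + 1) - 1 / (4 * (m:ℝ) + 3)) :=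
        ((amore_leibniz.mul_left 4).tsum_eq).symm
    _ = ∑' m : ℕ, ∑' n : ℕ, amoreG μ n m := tsum_congr fun m => ((hgeom m).tsum_eq).symm
    _ = ∑' n : ℕ, ∑' m : ℕ, amoreG μ n m := hcomm.symm
    _ = _ := tsum_congr fun n => (amore_inner μ hμ0 n).tsum_eq

theorem amore_pi (μ : ℝ) (hμ0 : 0 < μ) (hμ1 : μ ≤ 1) :
    (Real.pi : ℂ) = ∑' n : ℕ, (μ : ℂ) ^ (n + 1) / ((μ : ℂ) + 1) ^ (n + 2) *
        ∑ k ∈ Icc 1 (n + 1), (Nat.choose (n + 1) k : ℂ) * (1 / (μ : ℂ) ^ k) *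
          (((3 : ℂ) ^ k - 1) / 4 ^ k) * riemannZeta ((k : ℂ) + 1) := by
  have h := amore_real μ hμ0
  calc (Real.pi : ℂ)
      = ((∑' n : ℕ, μ ^ (n + 1) / (μ + 1) ^ (n + 2) *
          ∑ k ∈ Icc 1 (n + 1), (Nat.choose (n + 1) k : ℝ) * (1 / μ ^ k) *
            ((3 ^ k - 1) / 4 ^ k) * (∑' m : ℕ, 1 / ((m : ℝ) + 1) ^ (k + 1)) : ℝ) : ℂ) := by
        rw [← h]
    _ = ∑' n : ℕ, ((μ ^ (n + 1) / (μ + 1) ^ (n + 2) *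
          ∑ k ∈ Icc 1 (n + 1), (Nat.choose (n + 1) k : ℝ) * (1 / μ ^ k) *
            ((3 ^ k - 1) / 4 ^ k) * (∑' m : ℕ, 1 / ((m : ℝ) + 1) ^ (k + 1)) : ℝ) : ℂ) :=
        Complex.ofReal_tsum _
    _ = _ := by
        refine tsum_congr fun n => ?_
        have hz : ∀ k ∈ Icc 1 (n + 1),
            (Nat.choose (n + 1) k : ℂ) * (1 / (μ : ℂ) ^ k) *
              (((3 : ℂ) ^ k - 1) / 4 ^ k) * riemannZeta ((k : ℂ) + 1)
            = (((Nat.choose (n + 1) k : ℝ) * (1 / μ ^ k) *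
              ((3 ^ k - 1) / 4 ^ k) * (∑' m : ℕ, 1 / ((m : ℝ) + 1) ^ (k + 1)) : ℝ) : ℂ) := by
          intro k hk
          rw [amore_zeta k (Finset.mem_Icc.1 hk).1]
          push_cast
          ring
        rw [Finset.sum_congr rfl hz]
        push_cast
        ring
end

section
/- For |x| < 1 and μ with 0 < μ ≤ 1, ψ(1+x) + γ = ∑_{n=0}^∞ (μ^n/(μ+1)^{n+1}) ∑_{k=1}^n C(n,k) (x^k/μ^k)(-1)^{k-1} ζ(k+1). -/
open Finset Filter Topology

/-- The digamma function `ψ = Γ'/Γ`. -/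
noncomputable def digamma (x : ℝ) : ℝ := deriv Real.Gamma x / Real.Gamma x


lemma digamma_series {s : ℝ} (hs : 0 < s) :
    digamma s = -Real.eulerMascheroniConstant +
      ∑' j : ℕ, (((j : ℝ) + 1)⁻¹ - (s + j)⁻¹) := by
  set γ := Real.eulerMascheroniConstant
  set a : ℝ := s / 2 with ha_def
  set b : ℝ := s + 1 with hb_def
  set m : ℝ := min a 1 with hm_def
  have ha : 0 < a := by positivity
  have hm : 0 < m := lt_min ha one_pos
  have hm1 : m ≤ 1 := min_le_right _ _
  have hma : m ≤ a := min_le_left _ _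
  set U : Set ℝ := Set.Ioo a b with hU_def
  have hsU : s ∈ U := ⟨by simp only [ha_def]; linarith, by simp only [hb_def]; linarith⟩
  have hUpos : ∀ t ∈ U, 0 < t := fun t ht => lt_trans ha ht.1
  -- the summand
  set h : ℕ → ℝ → ℝ := fun j t => ((j : ℝ) + 1)⁻¹ - (t + j)⁻¹ with hh_def
  set u : ℕ → ℝ := fun j => (b + 1) / m * (((j : ℝ) + 1) ^ 2)⁻¹ with hu_def
  have hu : Summable u := by
    apply Summable.mul_left
    have h2 : Summable (fun n : ℕ => ((n : ℝ) ^ 2)⁻¹) := by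
      simpa [one_div] using summable_one_div_nat_pow.mpr one_lt_two
    have := (summable_nat_add_iff 1).mpr h2
    refine this.congr fun n => by push_cast; ring
  have hbound : ∀ j : ℕ, ∀ t ∈ U, ‖h j t‖ ≤ u j := by
    intro j t ht
    have htpos : 0 < t := hUpos t ht
    have hj1 : (0:ℝ) < (j:ℝ) + 1 := by positivity
    have htj : (0:ℝ) < t + j := by positivity
    have heq : h j t = (t - 1) / (((j:ℝ) + 1) * (t + j)) := by
      simp only [hh_def]
      field_simp
      ring
    have hnum : |t - 1| ≤ b + 1 := by
      rw [abs_le]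
      constructor
      · have := ht.2; simp only [hb_def] at *; nlinarith [hs]
      · have := ht.2; simp only [hb_def] at *; nlinarith
    have hden : m * ((j:ℝ) + 1) ^ 2 ≤ ((j:ℝ) + 1) * (t + j) := by
      have h1 : m ≤ t := le_trans hma (le_of_lt ht.1)
      have h2 : m * j ≤ j := by nlinarith [Nat.cast_nonneg (α := ℝ) j]
      nlinarith [Nat.cast_nonneg (α := ℝ) j]
    have hdenpos : 0 < m * ((j:ℝ) + 1) ^ 2 := by positivity
    rw [heq, Real.norm_eq_abs, abs_div, abs_of_pos (mul_pos hj1 htj)]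
    calc |t - 1| / (((j:ℝ) + 1) * (t + j)) ≤ (b + 1) / (m * ((j:ℝ)+1)^2) :=
          div_le_div₀ (by positivity) hnum hdenpos hden
      _ = u j := by simp only [hu_def]; field_simp
  -- uniform convergence of the sums
  have hS : TendstoUniformlyOn (fun n t => ∑ j ∈ range (n+1), h j t)
      (fun t => ∑' j, h j t) atTop U := by
    have h0 := tendstoUniformlyOn_tsum_nat hu hbound
    rw [Metric.tendstoUniformlyOn_iff] at h0 ⊢
    intro ε hε
    exact (tendsto_add_atTop_nat 1).eventually (h0 ε hε)
  -- convergence of constants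
  have hc : Tendsto (fun n : ℕ => Real.log n - ∑ j ∈ range (n+1), ((j:ℝ)+1)⁻¹)
      atTop (𝓝 (-γ)) := by
    have hH : ∀ n : ℕ, ∑ j ∈ range (n+1), ((j:ℝ)+1)⁻¹ = ((harmonic n : ℝ) + ((n:ℝ)+1)⁻¹) := by
      intro n
      rw [show (harmonic n : ℝ) = ∑ j ∈ range n, ((j:ℝ)+1)⁻¹ by
        rw [harmonic]; push_cast; rfl]
      rw [Finset.sum_range_succ]
    have h1 : Tendsto (fun n : ℕ => -(((harmonic n : ℝ)) - Real.log n) - ((n:ℝ)+1)⁻¹)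
        atTop (𝓝 (-γ - 0)) := by
      exact (Real.tendsto_harmonic_sub_log.neg).sub (by simpa [one_div] using tendsto_one_div_add_atTop_nhds_zero_nat (𝕜 := ℝ))
    rw [sub_zero] at h1
    refine h1.congr fun n => ?_
    rw [hH n]; ring
  -- uniform convergence of f'
  set f' : ℕ → ℝ → ℝ := fun n t => Real.log n - ∑ j ∈ range (n+1), (t + j)⁻¹ with hf'_def
  set g' : ℝ → ℝ := fun t => -γ + ∑' j : ℕ, h j t with hg'_def
  have hunif : TendstoUniformlyOn f' g' atTop U := by
    have hcu : TendstoUniformlyOn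
        (fun (n : ℕ) (_ : ℝ) => Real.log n - ∑ j ∈ range (n+1), ((j:ℝ)+1)⁻¹)
        (fun _ => -γ) atTop U := by
      rw [Metric.tendstoUniformlyOn_iff]
      intro ε hε
      filter_upwards [Metric.tendsto_nhds.mp hc ε hε] with n hn t _
      simpa [dist_comm] using hn
    have := hcu.add hS
    refine this.congr ?_
    filter_upwards with n t _
    simp only [Pi.add_apply]
    rw [Finset.sum_sub_distrib]
    ring
  -- HasDerivAt of the approximants
  set f : ℕ → ℝ → ℝ := fun n t =>
    t * Real.log n + Real.log (n.factorial) - ∑ j ∈ range (n+1), Real.log (t + j) with hf_def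
  have hderiv : ∀ n : ℕ, ∀ t ∈ U, HasDerivAt (f n) (f' n t) t := by
    intro n t ht
    have htpos : 0 < t := hUpos t ht
    have h1 : HasDerivAt (fun y : ℝ => y * Real.log n + Real.log (n.factorial))
        (Real.log n) t := by
      simpa using (hasDerivAt_mul_const (Real.log n)).add_const (Real.log (n.factorial))
    have h2 : HasDerivAt (fun y : ℝ => ∑ j ∈ range (n+1), Real.log (y + j))
        (∑ j ∈ range (n+1), (t + (j:ℝ))⁻¹) t := by
      apply HasDerivAt.fun_sum
      intro i _
      have hti : t + (i:ℝ) ≠ 0 := by positivity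
      have := ((hasDerivAt_id t).add_const (i:ℝ)).log (by simpa using hti)
      simpa [one_div] using this
    exact h1.sub h2
  -- pointwise convergence to log ∘ Gamma
  have hpt : ∀ t ∈ U, Tendsto (fun n => f n t) atTop (𝓝 (Real.log (Real.Gamma t))) := by
    intro t ht
    have htpos : 0 < t := hUpos t ht
    have hΓ : 0 < Real.Gamma t := Real.Gamma_pos_of_pos htpos
    have h1 : Tendsto (fun n => Real.log (Real.GammaSeq t n)) atTop
        (𝓝 (Real.log (Real.Gamma t))) :=
      ((Real.continuousAt_log hΓ.ne').tendsto).comp (Real.GammaSeq_tendsto_Gamma t)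
    refine h1.congr' ?_
    filter_upwards [eventually_ge_atTop 1] with n hn
    have hnpos : (0:ℝ) < n := by exact_mod_cast hn
    have hprodpos : 0 < ∏ j ∈ range (n+1), (t + (j:ℝ)) := by
      apply Finset.prod_pos
      intro i _
      positivity
    have hnum : (0:ℝ) < (n:ℝ) ^ t * (n.factorial : ℝ) := by
      have := Real.rpow_pos_of_pos hnpos t
      have h2 : (0:ℝ) < (n.factorial : ℝ) := by exact_mod_cast n.factorial_pos
      positivity
    rw [Real.GammaSeq, Real.log_div hnum.ne' hprodpos.ne',
      Real.log_mul (Real.rpow_pos_of_pos hnpos t).ne'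
        (by exact_mod_cast n.factorial_pos.ne'),
      Real.log_rpow hnpos, Real.log_prod (fun i _ => by positivity)]
  -- conclude
  have hg : HasDerivAt (fun t => Real.log (Real.Gamma t)) (g' s) s :=
    hasDerivAt_of_tendstoUniformlyOn isOpen_Ioo hunif
      (Eventually.of_forall hderiv) hpt hsU
  have hΓs : 0 < Real.Gamma s := Real.Gamma_pos_of_pos hs
  have hΓd : HasDerivAt Real.Gamma (deriv Real.Gamma s) s := by
    apply (Real.differentiableAt_Gamma ?_).hasDerivAt
    exact fun n => ne_of_gt (lt_of_le_of_lt (neg_nonpos.mpr (Nat.cast_nonneg n)) hs)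
  have hg2 : HasDerivAt (fun t => Real.log (Real.Gamma t))
      (deriv Real.Gamma s / Real.Gamma s) s := hΓd.log hΓs.ne'
  have := hg2.unique hg
  rw [digamma, this, hg'_def]

noncomputable def Zr (m : ℕ) : ℝ := ∑' n : ℕ, (((n : ℝ) + 1) ^ m)⁻¹

lemma Zr_summable {m : ℕ} (hm : 2 ≤ m) :
    Summable (fun n : ℕ => (((n : ℝ) + 1) ^ m)⁻¹) := by
  have h2 : Summable (fun n : ℕ => (((n : ℝ) + 1) ^ 2)⁻¹) := by
    have h0 : Summable (fun n : ℕ => ((n : ℝ) ^ 2)⁻¹) := by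
      simpa [one_div] using summable_one_div_nat_pow.mpr one_lt_two
    exact ((summable_nat_add_iff 1).mpr h0).congr fun n => by push_cast; ring
  refine h2.of_nonneg_of_le (fun n => by positivity) (fun n => ?_)
  have h1 : (1:ℝ) ≤ (n : ℝ) + 1 := by linarith [Nat.cast_nonneg (α := ℝ) n]
  gcongr

lemma Zr_nonneg (m : ℕ) : 0 ≤ Zr m :=
  tsum_nonneg fun n => by positivity

lemma Zr_le_two {m : ℕ} (hm : 2 ≤ m) : Zr m ≤ 2 := by
  have h1 : Zr m ≤ Zr 2 := by
    apply Summable.tsum_le_tsum _ (Zr_summable hm) (Zr_summable le_rfl)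
    intro n
    have h1 : (1:ℝ) ≤ (n : ℝ) + 1 := by linarith [Nat.cast_nonneg (α := ℝ) n]
    gcongr
  have h2 : Zr 2 = Real.pi ^ 2 / 6 := by
    have h0 := hasSum_zeta_two
    have h3 := (hasSum_nat_add_iff' (f := fun n : ℕ => (1:ℝ)/(n:ℝ)^2) 1).mpr h0
    norm_num at h3
    rw [Zr, h3.tsum_eq]
  have h4 : Real.pi < 3.15 := Real.pi_lt_d2
  have h5 : 0 < Real.pi := Real.pi_pos
  rw [h2] at h1
  nlinarith

lemma partII {x : ℝ} (hx : |x| < 1) :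
    HasSum (fun k : ℕ => (-1) ^ k * x ^ (k + 1) * Zr (k + 2))
      (∑' j : ℕ, (((j : ℝ) + 1)⁻¹ - ((1 + x) + j)⁻¹)) := by
  obtain ⟨hx1, hx2⟩ := abs_lt.mp hx
  set F : ℕ → ℕ → ℝ := fun j k => (-1) ^ k * x ^ (k + 1) * (((j : ℝ) + 1) ^ (k + 2))⁻¹
    with hF_def
  have hj1 : ∀ j : ℕ, (1:ℝ) ≤ (j : ℝ) + 1 := fun j => by
    linarith [Nat.cast_nonneg (α := ℝ) j]
  have hjpos : ∀ j : ℕ, (0:ℝ) < (j : ℝ) + 1 := fun j => by positivity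
  -- row sums
  have hrow : ∀ j : ℕ, HasSum (fun k => F j k) (((j : ℝ) + 1)⁻¹ - ((1 + x) + j)⁻¹) := by
    intro j
    have hr : ‖-x / ((j : ℝ) + 1)‖ < 1 := by
      rw [Real.norm_eq_abs, abs_div, abs_neg, abs_of_pos (hjpos j), div_lt_one (hjpos j)]
      linarith [hj1 j]
    have hgeo := (hasSum_geometric_of_norm_lt_one hr).mul_left (x / ((j : ℝ) + 1) ^ 2)
    have hfun : (fun k : ℕ => x / ((j : ℝ) + 1) ^ 2 * (-x / ((j : ℝ) + 1)) ^ k)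
        = fun k => F j k := by
      funext k
      rw [hF_def]
      rw [div_pow, neg_pow]
      field_simp
      ring
    have hval : x / ((j : ℝ) + 1) ^ 2 * (1 - -x / ((j : ℝ) + 1))⁻¹
        = ((j : ℝ) + 1)⁻¹ - ((1 + x) + j)⁻¹ := by
      have hjx : (0:ℝ) < (1 + x) + (j : ℝ) := by
        have := Nat.cast_nonneg (α := ℝ) j; linarith
      have hne1 : ((j : ℝ) + 1) ≠ 0 := (hjpos j).ne'
      have hne3 : ((1 + x) + (j : ℝ)) ≠ 0 := hjx.ne'
      have h2 : (1 : ℝ) - -x / ((j : ℝ) + 1) = ((1 + x) + (j : ℝ)) / ((j : ℝ) + 1) := by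
        field_simp
        ring
      rw [h2, inv_div, inv_sub_inv hne1 hne3, div_mul_div_comm,
        div_eq_div_iff (by positivity) (by positivity)]
      ring
    rw [hfun, hval] at hgeo
    exact hgeo
  -- absolute row sums and bound
  have habs : ∀ j k, |F j k| = |x| ^ (k + 1) * (((j : ℝ) + 1) ^ (k + 2))⁻¹ := by
    intro j k
    rw [hF_def]
    rw [abs_mul, abs_mul, abs_pow, abs_pow, abs_neg, abs_one, one_pow, one_mul,
      abs_inv, abs_pow, abs_of_pos (hjpos j)]
  have habsrow : ∀ j : ℕ, HasSum (fun k => |F j k|)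
      (|x| / ((j : ℝ) + 1) ^ 2 * (1 - |x| / ((j : ℝ) + 1))⁻¹) := by
    intro j
    have hr : ‖|x| / ((j : ℝ) + 1)‖ < 1 := by
      rw [Real.norm_eq_abs, abs_div, abs_abs, abs_of_pos (hjpos j), div_lt_one (hjpos j)]
      linarith [hj1 j]
    have hgeo := (hasSum_geometric_of_norm_lt_one hr).mul_left (|x| / ((j : ℝ) + 1) ^ 2)
    have hne1 : ((j : ℝ) + 1) ≠ 0 := (hjpos j).ne'
    have hfun : (fun k : ℕ => |x| / ((j : ℝ) + 1) ^ 2 * (|x| / ((j : ℝ) + 1)) ^ k)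
        = fun k => |F j k| := by
      funext k
      rw [habs j k, div_pow]
      field_simp
      ring
    rw [hfun] at hgeo
    exact hgeo
  -- summability over pairs
  have hrowval : ∀ j : ℕ, (∑' k, |F j k|) ≤ |x| * (1 - |x|)⁻¹ * (((j:ℝ)+1)^2)⁻¹ := by
    intro j
    rw [(habsrow j).tsum_eq]
    have hpos : (0:ℝ) < 1 - |x| := by linarith [abs_nonneg x]
    have h1 : (1 - |x| / ((j:ℝ)+1))⁻¹ ≤ (1 - |x|)⁻¹ := by
      gcongr
      rw [div_le_iff₀ (hjpos j)]
      nlinarith [abs_nonneg x, hj1 j]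
    calc |x| / ((j:ℝ)+1)^2 * (1 - |x| / ((j:ℝ)+1))⁻¹
        ≤ |x| / ((j:ℝ)+1)^2 * (1 - |x|)⁻¹ := by
          apply mul_le_mul_of_nonneg_left h1 (by positivity)
      _ = |x| * (1 - |x|)⁻¹ * (((j:ℝ)+1)^2)⁻¹ := by ring
  have hFa : Summable (fun p : ℕ × ℕ => |F p.1 p.2|) := by
    rw [summable_prod_of_nonneg (fun p => abs_nonneg _)]
    refine ⟨fun j => (habsrow j).summable, ?_⟩
    apply Summable.of_nonneg_of_le (fun j => tsum_nonneg fun k => abs_nonneg _) hrowval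
    exact (Zr_summable le_rfl).mul_left _
  have hF : Summable (fun p : ℕ × ℕ => F p.1 p.2) := summable_abs_iff.mp hFa
  set T := ∑' p : ℕ × ℕ, F p.1 p.2 with hT_def
  have hpair : HasSum (fun p : ℕ × ℕ => F p.1 p.2) T := hF.hasSum
  have h1 : HasSum (fun j : ℕ => (((j:ℝ)+1)⁻¹ - ((1+x)+j)⁻¹)) T := hpair.prod_fiberwise hrow
  have hcol : ∀ k : ℕ, HasSum (fun j => F j k) ((-1)^k * x^(k+1) * Zr (k+2)) := by
    intro k
    have hz : HasSum (fun n : ℕ => (((n:ℝ)+1)^(k+2))⁻¹) (Zr (k+2)) :=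
      (Zr_summable (by omega)).hasSum
    exact hz.mul_left _
  have hswap : HasSum (fun p : ℕ × ℕ => F p.2 p.1) T :=
    ((Equiv.prodComm ℕ ℕ).hasSum_iff).mpr hpair
  have h2 : HasSum (fun k : ℕ => (-1)^k * x^(k+1) * Zr (k+2)) T := hswap.prod_fiberwise hcol
  rw [h1.tsum_eq]
  exact h2

lemma zeta_ofReal {k : ℕ} (hk : 1 ≤ k) :
    riemannZeta ((k : ℂ) + 1) = ((Zr (k + 1) : ℝ) : ℂ) := by
  have h1 : 1 < ((k : ℂ) + 1).re := by
    simp only [Complex.add_re, Complex.natCast_re, Complex.one_re]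
    have : (1:ℝ) ≤ (k : ℝ) := by exact_mod_cast hk
    linarith
  rw [zeta_eq_tsum_one_div_nat_add_one_cpow h1, Zr, Complex.ofReal_tsum]
  refine tsum_congr fun n => ?_
  have h2 : ((n : ℂ) + 1) ^ ((k : ℂ) + 1) = ((n : ℂ) + 1) ^ (k + 1 : ℕ) := by
    rw [show ((k : ℂ) + 1) = ((k + 1 : ℕ) : ℂ) by push_cast; ring, Complex.cpow_natCast]
  rw [h2, one_div]
  push_cast
  ring

lemma zeta_norm_le {k : ℕ} (hk : 1 ≤ k) : ‖riemannZeta ((k : ℂ) + 1)‖ ≤ 2 := by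
  rw [zeta_ofReal hk, Complex.norm_real, Real.norm_eq_abs,
    abs_of_nonneg (Zr_nonneg _)]
  exact Zr_le_two (by omega)

set_option maxHeartbeats 2000000 in
theorem digamma_param (x μ : ℝ) (hx : |x| < 1) (hμ0 : 0 < μ) (hμ1 : μ ≤ 1) :
    ((digamma (1 + x) + Real.eulerMascheroniConstant : ℝ) : ℂ) =
      ∑' n : ℕ, (μ : ℂ) ^ n / ((μ : ℂ) + 1) ^ (n + 1) *
        ∑ k ∈ Icc 1 n, (n.choose k : ℂ) * ((x : ℂ) ^ k / (μ : ℂ) ^ k) *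
          (-1) ^ (k - 1) * riemannZeta ((k : ℂ) + 1) := by
  obtain ⟨hx1, hx2⟩ := abs_lt.mp hx
  have hs : (0:ℝ) < 1 + x := by linarith
  have hμ1' : (0:ℝ) < μ + 1 := by linarith
  -- real side
  set D : ℝ := digamma (1 + x) + Real.eulerMascheroniConstant with hD_def
  have hI := digamma_series hs
  have hDval : D = ∑' j : ℕ, (((j : ℝ) + 1)⁻¹ - ((1 + x) + j)⁻¹) := by
    rw [hD_def, hI]
    ring
  have hII : HasSum (fun k : ℕ => (-1) ^ k * x ^ (k + 1) * Zr (k + 2)) D := by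
    rw [hDval]; exact partII hx
  -- complex setup
  have hμC : (μ : ℂ) ≠ 0 := Complex.ofReal_ne_zero.mpr hμ0.ne'
  have hcast : (μ : ℂ) + 1 = ((μ + 1 : ℝ) : ℂ) := by push_cast; ring
  have hμ1C : (μ : ℂ) + 1 ≠ 0 := by
    rw [hcast]
    exact Complex.ofReal_ne_zero.mpr hμ1'.ne'
  set t : ℂ := (μ : ℂ) / ((μ : ℂ) + 1) with ht_def
  have hμnorm : ‖(μ : ℂ)‖ = μ := by
    rw [Complex.norm_real, Real.norm_eq_abs, abs_of_pos hμ0]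
  have hμ1norm : ‖(μ : ℂ) + 1‖ = μ + 1 := by
    rw [hcast, Complex.norm_real, Real.norm_eq_abs, abs_of_pos hμ1']
  have hxnorm : ‖(x : ℂ)‖ = |x| := by rw [Complex.norm_real, Real.norm_eq_abs]
  have htnorm : ‖t‖ < 1 := by
    rw [ht_def, norm_div, hμnorm, hμ1norm, div_lt_one hμ1']
    linarith
  have h1t : 1 - t = ((μ : ℂ) + 1)⁻¹ := by
    rw [ht_def]
    field_simp
    ring
  -- the double family
  set G : ℕ → ℕ → ℂ := fun n k =>
    if 1 ≤ k ∧ k ≤ n then (μ : ℂ) ^ n / ((μ : ℂ) + 1) ^ (n + 1) *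
      ((n.choose k : ℂ) * ((x : ℂ) ^ k / (μ : ℂ) ^ k) * (-1) ^ (k - 1) *
        riemannZeta ((k : ℂ) + 1))
    else 0 with hG_def
  have hGzero : ∀ n k, k ∉ Icc 1 n → G n k = 0 := by
    intro n k hk
    rw [hG_def]
    exact if_neg (by simpa [Finset.mem_Icc] using hk)
  -- rows
  have hrow_tsum : ∀ n : ℕ, (μ : ℂ) ^ n / ((μ : ℂ) + 1) ^ (n + 1) *
      ∑ k ∈ Icc 1 n, (n.choose k : ℂ) * ((x : ℂ) ^ k / (μ : ℂ) ^ k) * (-1) ^ (k - 1) *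
        riemannZeta ((k : ℂ) + 1) = ∑' k : ℕ, G n k := by
    intro n
    rw [tsum_eq_sum (hGzero n), Finset.mul_sum]
    refine Finset.sum_congr rfl fun k hk => ?_
    simp only [hG_def]
    rw [if_pos (by simpa [Finset.mem_Icc] using hk)]
  -- norm of entries
  have hGnorm : ∀ n k, k ∈ Icc 1 n →
      ‖G n k‖ ≤ 2 * ((n.choose k : ℝ) * (μ ^ (n - k) * |x| ^ k) / (μ + 1) ^ (n + 1)) := by
    intro n k hk
    obtain ⟨hk1, hkn⟩ := Finset.mem_Icc.mp hk
    have hGval : G n k = (μ : ℂ) ^ n / ((μ : ℂ) + 1) ^ (n + 1) *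
        ((n.choose k : ℂ) * ((x : ℂ) ^ k / (μ : ℂ) ^ k) * (-1) ^ (k - 1) *
          riemannZeta ((k : ℂ) + 1)) := by
      simp only [hG_def]
      rw [if_pos ⟨hk1, hkn⟩]
    rw [hGval]
    rw [norm_mul, norm_mul, norm_mul, norm_mul, norm_div, norm_div, norm_pow, norm_pow,
      norm_pow, norm_pow, norm_pow, hμnorm, hμ1norm, hxnorm, Complex.norm_natCast,
      norm_neg, norm_one, one_pow, mul_one]
    have hz := zeta_norm_le hk1
    have hpow : μ ^ (n - k) = μ ^ n / μ ^ k := pow_sub₀ μ hμ0.ne' hkn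
    have hB : (0:ℝ) ≤ (n.choose k : ℝ) * (μ ^ (n - k) * |x| ^ k) / (μ + 1) ^ (n + 1) := by
      positivity
    calc μ ^ n / (μ + 1) ^ (n + 1) * ((n.choose k : ℝ) * (|x| ^ k / μ ^ k) *
          ‖riemannZeta ((k : ℂ) + 1)‖)
        = (n.choose k : ℝ) * (μ ^ (n - k) * |x| ^ k) / (μ + 1) ^ (n + 1) *
          ‖riemannZeta ((k : ℂ) + 1)‖ := by
          rw [hpow]
          field_simp
      _ ≤ (n.choose k : ℝ) * (μ ^ (n - k) * |x| ^ k) / (μ + 1) ^ (n + 1) * 2 :=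
          mul_le_mul_of_nonneg_left hz hB
      _ = 2 * ((n.choose k : ℝ) * (μ ^ (n - k) * |x| ^ k) / (μ + 1) ^ (n + 1)) := by ring
  -- summability of norms over pairs
  set q : ℝ := (μ + |x|) / (μ + 1) with hq_def
  have hq1 : q < 1 := by rw [hq_def, div_lt_one hμ1']; linarith [abs_lt.mpr ⟨hx1, hx2⟩]
  have hqnonneg : 0 ≤ q := by positivity
  have hrow_norm_sum : ∀ n : ℕ, ∑' k, ‖G n k‖ ≤ 2 / (μ + 1) * q ^ n := by
    intro n
    rw [tsum_eq_sum (s := Icc 1 n) (fun k hk => by rw [hGzero n k hk, norm_zero])]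
    calc ∑ k ∈ Icc 1 n, ‖G n k‖
        ≤ ∑ k ∈ Icc 1 n, 2 * ((n.choose k : ℝ) * (μ ^ (n-k) * |x| ^ k) / (μ+1)^(n+1)) :=
          Finset.sum_le_sum (fun k hk => hGnorm n k hk)
      _ ≤ ∑ k ∈ range (n+1), 2 * ((n.choose k : ℝ) * (μ ^ (n-k) * |x| ^ k) / (μ+1)^(n+1)) := by
          apply Finset.sum_le_sum_of_subset_of_nonneg
          · intro k hk
            rw [Finset.mem_range]
            exact Nat.lt_succ_of_le (Finset.mem_Icc.mp hk).2
          · intro k _ _; positivity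
      _ = 2 / (μ+1)^(n+1) * ∑ k ∈ range (n+1), (|x| ^ k * μ ^ (n-k) * (n.choose k : ℝ)) := by
          rw [Finset.mul_sum]
          exact Finset.sum_congr rfl fun k _ => by ring
      _ = 2 / (μ+1)^(n+1) * (|x| + μ)^n := by
          congr 1
          exact (add_pow |x| μ n).symm
      _ = 2 / (μ + 1) * q ^ n := by
          rw [hq_def, div_pow, show |x| + μ = μ + |x| from add_comm _ _]
          have hne : ((μ+1:ℝ)) ≠ 0 := hμ1'.ne'
          rw [pow_succ]
          field_simp
  have hNormSummable : Summable (fun p : ℕ × ℕ => ‖G p.1 p.2‖) := by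
    rw [summable_prod_of_nonneg (fun p => norm_nonneg _)]
    constructor
    · intro n
      exact summable_of_ne_finset_zero (s := Icc 1 n)
        (fun k hk => by rw [hGzero n k hk, norm_zero])
    · apply Summable.of_nonneg_of_le (fun n => tsum_nonneg fun k => norm_nonneg _)
        hrow_norm_sum
      refine Summable.mul_left _ ?_
      apply summable_geometric_of_norm_lt_one
      rwa [Real.norm_eq_abs, abs_of_nonneg hqnonneg]
  have hGSummable : Summable (fun p : ℕ × ℕ => G p.1 p.2) := hNormSummable.of_norm
  set T : ℂ := ∑' p : ℕ × ℕ, G p.1 p.2 with hT_def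
  have hpair : HasSum (fun p : ℕ × ℕ => G p.1 p.2) T := hGSummable.hasSum
  -- rows as HasSum
  have hrow_hs : ∀ n : ℕ, HasSum (fun k => G n k)
      ((μ : ℂ) ^ n / ((μ : ℂ) + 1) ^ (n + 1) *
        ∑ k ∈ Icc 1 n, (n.choose k : ℂ) * ((x : ℂ) ^ k / (μ : ℂ) ^ k) * (-1) ^ (k - 1) *
          riemannZeta ((k : ℂ) + 1)) := by
    intro n
    have h := (summable_of_ne_finset_zero (L := SummationFilter.unconditional ℕ) (s := Icc 1 n) (hGzero n)).hasSum
    rwa [← hrow_tsum n] at h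
  have h1 : HasSum (fun n : ℕ => (μ : ℂ) ^ n / ((μ : ℂ) + 1) ^ (n + 1) *
      ∑ k ∈ Icc 1 n, (n.choose k : ℂ) * ((x : ℂ) ^ k / (μ : ℂ) ^ k) * (-1) ^ (k - 1) *
        riemannZeta ((k : ℂ) + 1)) T := hpair.prod_fiberwise hrow_hs
  -- columns
  have hcol : ∀ k : ℕ, HasSum (fun n => G n k)
      (if k = 0 then 0 else (-1) ^ (k - 1) * riemannZeta ((k : ℂ) + 1) * (x : ℂ) ^ k) := by
    intro k
    rcases Nat.eq_zero_or_pos k with rfl | hk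
    · rw [if_pos rfl]
      have hfn : (fun n => G n 0) = fun _ => (0:ℂ) :=
        funext fun n => hGzero n 0 (by simp)
      rw [hfn]
      exact hasSum_zero
    · rw [if_neg hk.ne']
      set c : ℂ := ((μ : ℂ) + 1)⁻¹ * (((x : ℂ) ^ k / (μ : ℂ) ^ k) * (-1) ^ (k - 1) *
        riemannZeta ((k : ℂ) + 1)) with hc_def
      have hfun : (fun n => c * ((n.choose k : ℂ) * t ^ n)) = fun n => G n k := by
        funext n
        by_cases hkn : k ≤ n
        · simp only [hG_def]
          rw [if_pos ⟨hk, hkn⟩, hc_def, ht_def, div_pow]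
          field_simp
          ring
        · rw [hGzero n k (by simp only [Finset.mem_Icc]; omega),
            Nat.choose_eq_zero_of_lt (by omega)]
          simp
      have hgeo := hasSum_choose_mul_geometric_of_norm_lt_one k htnorm
      have hgeo2 : HasSum (fun m : ℕ => (((m + k).choose k : ℂ)) * t ^ (m + k))
          (t ^ k * (1 / (1 - t) ^ (k + 1))) := by
        have h := hgeo.mul_left (t ^ k)
        rwa [show (fun m : ℕ => t ^ k * ((((m + k).choose k : ℂ)) * t ^ m))
          = fun m : ℕ => (((m + k).choose k : ℂ)) * t ^ (m + k) from
          funext fun m => by rw [pow_add]; ring] at h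
      have h0 : ∑ i ∈ range k, ((i.choose k : ℂ)) * t ^ i = 0 :=
        Finset.sum_eq_zero fun i hi => by
          rw [Nat.choose_eq_zero_of_lt (Finset.mem_range.mp hi)]
          simp
      have hgeo3 : HasSum (fun n : ℕ => ((n.choose k : ℂ)) * t ^ n)
          (t ^ k * (1 / (1 - t) ^ (k + 1))) := by
        have h := (hasSum_nat_add_iff
          (f := fun n : ℕ => ((n.choose k : ℂ)) * t ^ n) k).mp hgeo2
        rwa [h0, add_zero] at h
      have h := hgeo3.mul_left c
      have hval : c * (t ^ k * (1 / (1 - t) ^ (k + 1)))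
          = (-1) ^ (k - 1) * riemannZeta ((k : ℂ) + 1) * (x : ℂ) ^ k := by
        rw [h1t, hc_def, ht_def, div_pow, one_div, inv_pow, inv_inv]
        field_simp
        ring
      rwa [hfun, hval] at h
  have hswap : HasSum (fun p : ℕ × ℕ => G p.2 p.1) T :=
    ((Equiv.prodComm ℕ ℕ).hasSum_iff).mpr hpair
  have h2 : HasSum (fun k : ℕ => if k = 0 then 0 else
      (-1) ^ (k - 1) * riemannZeta ((k : ℂ) + 1) * (x : ℂ) ^ k) T :=
    hswap.prod_fiberwise hcol
  -- identify T with D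
  have hIIC : HasSum (fun k : ℕ => (((-1 : ℝ) ^ k * x ^ (k + 1) * Zr (k + 2) : ℝ) : ℂ))
      ((D : ℝ) : ℂ) := by
    simpa using Complex.ofRealCLM.hasSum hII
  have hfe : (fun k : ℕ => (((-1 : ℝ) ^ k * x ^ (k + 1) * Zr (k + 2) : ℝ) : ℂ))
      = fun k : ℕ => (if (k + 1 : ℕ) = 0 then 0 else
        (-1) ^ ((k + 1) - 1) * riemannZeta (((k + 1 : ℕ) : ℂ) + 1) * (x : ℂ) ^ (k + 1)) := by
    funext k
    rw [if_neg (Nat.succ_ne_zero k), Nat.add_sub_cancel,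
      zeta_ofReal (k := k + 1) (Nat.le_add_left 1 k)]
    push_cast
    ring
  rw [hfe] at hIIC
  have h3 := (hasSum_nat_add_iff (f := fun k : ℕ => if k = 0 then 0 else
      (-1) ^ (k - 1) * riemannZeta ((k : ℂ) + 1) * (x : ℂ) ^ k) 1).mp hIIC
  rw [Finset.range_one, Finset.sum_singleton, if_pos rfl, add_zero] at h3
  rw [h1.tsum_eq]
  exact (h2.unique h3).symm
end

section
/- For |x| < 1 real, x ≥ 0, and 0 < μ ≤ 1, ln Γ(x+1) + γx = ∑_{n=0}^∞ (μ^n/(μ+1)^{n+1}) ∑_{k=1}^n C(n,k) (x^{k+1}/(μ^k (k+1)))(-1)^{k-1} ζ(k+1). -/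
open Finset Filter Topology

noncomputable def zr (k : ℕ) : ℝ := ∑' m : ℕ, 1 / ((m : ℝ) + 1) ^ k

lemma zr_summable {k : ℕ} (hk : 2 ≤ k) : Summable (fun m : ℕ => 1 / ((m : ℝ) + 1) ^ k) := by
  have h1 : Summable (fun n : ℕ => 1 / (n : ℝ) ^ k) :=
    Real.summable_one_div_nat_pow.mpr (by omega)
  have h2 := (summable_nat_add_iff 1).mpr h1
  simpa using h2

lemma zr_nonneg (k : ℕ) : 0 ≤ zr k :=
  tsum_nonneg fun m => by positivity

lemma zr_le {k : ℕ} (hk : 2 ≤ k) : zr k ≤ zr 2 := by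
  refine Summable.tsum_le_tsum (fun m => ?_) (zr_summable hk) (zr_summable le_rfl)
  have h1 : (1 : ℝ) ≤ (m : ℝ) + 1 := by have := Nat.cast_nonneg (α := ℝ) m; linarith
  have := pow_le_pow_right₀ h1 hk
  exact one_div_le_one_div_of_le (by positivity) this

lemma zeta_eq_zr (k : ℕ) (hk : 1 ≤ k) :
    riemannZeta ((k : ℂ) + 1) = ((zr (k + 1) : ℝ) : ℂ) := by
  have h1 : (1 : ℝ) < ((k : ℂ) + 1).re := by
    simp only [Complex.add_re, Complex.natCast_re, Complex.one_re]
    exact_mod_cast Nat.lt_add_of_pos_left hk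
  rw [zeta_eq_tsum_one_div_nat_add_one_cpow h1, zr, Complex.ofReal_tsum]
  refine tsum_congr fun m => ?_
  have : ((k : ℂ) + 1) = ((k + 1 : ℕ) : ℂ) := by push_cast; ring
  rw [this, Complex.cpow_natCast]
  push_cast
  ring

lemma log_factorial (n : ℕ) :
    Real.log (Nat.factorial n : ℝ) = ∑ m ∈ range n, Real.log ((m : ℝ) + 1) := by
  induction n with
  | zero => simp
  | succ n ih =>
    rw [sum_range_succ, ← ih, Nat.factorial_succ, Nat.cast_mul,
      Real.log_mul (by exact_mod_cast Nat.succ_ne_zero n)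
        (by exact_mod_cast (Nat.factorial_pos n).ne'), add_comm]
    norm_num

lemma hasSum_log_gamma (x : ℝ) (hx1 : x < 1) (hx0 : 0 ≤ x) :
    HasSum (fun m : ℕ => x / ((m : ℝ) + 1) - Real.log (1 + x / ((m : ℝ) + 1)))
      (Real.log (Real.Gamma (x + 1)) + Real.eulerMascheroniConstant * x) := by
  set f : ℕ → ℝ := fun m => x / ((m : ℝ) + 1) - Real.log (1 + x / ((m : ℝ) + 1)) with hf
  have hm1 : ∀ m : ℕ, (0 : ℝ) < (m : ℝ) + 1 := fun m => by positivity
  have hpos : ∀ m : ℕ, (0 : ℝ) < 1 + x / ((m : ℝ) + 1) := fun m => by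
    have := div_nonneg hx0 (hm1 m).le; linarith
  have hf0 : ∀ m, 0 ≤ f m := by
    intro m
    have h := Real.log_le_sub_one_of_pos (hpos m)
    simp only [hf]
    linarith
  have hterm : ∀ m : ℕ, Real.log (1 + x / ((m : ℝ) + 1))
      = Real.log (x + 1 + (m : ℝ)) - Real.log ((m : ℝ) + 1) := by
    intro m
    rw [← Real.log_div (by have := hm1 m; linarith) (hm1 m).ne']
    congr 1
    field_simp
    ring
  have hA : ∀ n : ℕ, ∑ m ∈ range n, Real.log (1 + x / ((m : ℝ) + 1))
      = (∑ m ∈ range n, Real.log (x + 1 + (m : ℝ))) - Real.log (Nat.factorial n : ℝ) := by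
    intro n
    rw [log_factorial, ← Finset.sum_sub_distrib]
    exact Finset.sum_congr rfl fun m _ => hterm m
  have hH : ∀ n : ℕ, ((harmonic n : ℚ) : ℝ) = ∑ m ∈ range n, ((m : ℝ) + 1)⁻¹ := by
    intro n
    rw [harmonic]
    push_cast
    rfl
  have hsum : ∀ n : ℕ, ∑ m ∈ range n, f m
      = Real.BohrMollerup.logGammaSeq (x + 1) n
        + x * (((harmonic n : ℚ) : ℝ) - Real.log n)
        + (Real.log (x + 1 + (n : ℝ)) - Real.log n) := by
    intro n
    have e1 : ∑ m ∈ range n, f m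
        = x * (((harmonic n : ℚ) : ℝ)) -
          ((∑ m ∈ range n, Real.log (x + 1 + (m : ℝ))) - Real.log (Nat.factorial n : ℝ)) := by
      simp only [hf]
      rw [Finset.sum_sub_distrib, hA, hH, Finset.mul_sum]
      all_goals simp [div_eq_mul_inv]
    rw [e1, Real.BohrMollerup.logGammaSeq, Finset.sum_range_succ]
    ring
  have hγ : Tendsto (fun n : ℕ => ((harmonic n : ℚ) : ℝ) - Real.log n) atTop
      (𝓝 Real.eulerMascheroniConstant) := by
    apply Real.tendsto_eulerMascheroniSeq'.congr'
    filter_upwards [eventually_ne_atTop 0] with n hn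
    simp [Real.eulerMascheroniSeq', hn]
  have hlog : Tendsto (fun n : ℕ => Real.log (x + 1 + (n : ℝ)) - Real.log n) atTop (𝓝 0) := by
    have h1 : Tendsto (fun n : ℕ => 1 + (x + 1) / (n : ℝ)) atTop (𝓝 (1 + 0)) :=
      tendsto_const_nhds.add (tendsto_const_nhds.div_atTop
        (tendsto_natCast_atTop_atTop (R := ℝ)))
    have h2 : Tendsto (fun n : ℕ => Real.log (1 + (x + 1) / (n : ℝ))) atTop (𝓝 0) := by
      have := (Real.continuousAt_log (by norm_num : (1 : ℝ) + 0 ≠ 0)).tendsto.comp h1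
      simpa [Function.comp_def] using this
    apply h2.congr'
    filter_upwards [eventually_gt_atTop 0] with n hn
    have hn' : (0 : ℝ) < n := by exact_mod_cast hn
    rw [← Real.log_div (by positivity) hn'.ne']
    congr 1
    field_simp
    ring
  have htendsto : Tendsto (fun n : ℕ => ∑ m ∈ range n, f m) atTop
      (𝓝 (Real.log (Real.Gamma (x + 1)) + Real.eulerMascheroniConstant * x)) := by
    have T := ((Real.BohrMollerup.tendsto_log_gamma
        (by linarith : (0 : ℝ) < x + 1)).add (hγ.const_mul x)).add hlog
    have T' := T.congr fun n => (hsum n).symm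
    simpa [mul_comm, add_assoc] using T'
  have hmono : Monotone (fun n : ℕ => ∑ m ∈ range n, f m) := fun a b hab =>
    Finset.sum_le_sum_of_subset_of_nonneg (Finset.range_subset_range.mpr hab)
      fun i _ _ => hf0 i
  have hsummable : Summable f :=
    summable_of_sum_range_le hf0 fun n => hmono.ge_of_tendsto htendsto n
  exact (Summable.hasSum_iff_tendsto_nat hsummable).mpr htendsto

lemma hasSum_log_aux {t : ℝ} (ht : |t| < 1) :
    HasSum (fun j : ℕ => (-1 : ℝ) ^ j * t ^ (j + 2) / ((j : ℝ) + 2))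
      (t - Real.log (1 + t)) := by
  have h := Real.hasSum_pow_div_log_of_abs_lt_one (x := -t) (by rwa [abs_neg])
  have e : -Real.log (1 - -t)
      = (t - Real.log (1 + t)) + ∑ i ∈ Finset.range 1, (-t) ^ (i + 1) / ((i : ℝ) + 1) := by
    rw [sub_neg_eq_add]
    simp; ring
  rw [e] at h
  have h0 := (hasSum_nat_add_iff (f := fun n : ℕ => (-t) ^ (n + 1) / ((n : ℝ) + 1)) 1).mpr h
  convert h0 using 2 with j
  · rfl
  push_cast
  rw [show (-t) ^ (j + 1 + 1) = (-1 : ℝ) ^ j * t ^ (j + 2) by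
    rw [neg_pow]
    rw [show j + 1 + 1 = j + 2 from rfl, pow_add]
    ring]
  ring

lemma hasSum_cprime (x : ℝ) (hx1 : x < 1) (hx0 : 0 ≤ x) :
    HasSum (fun k : ℕ => if k = 0 then 0 else
        (-1 : ℝ) ^ (k - 1) * x ^ (k + 1) * zr (k + 1) / ((k : ℝ) + 1))
      (Real.log (Real.Gamma (x + 1)) + Real.eulerMascheroniConstant * x) := by
  set L := Real.log (Real.Gamma (x + 1)) + Real.eulerMascheroniConstant * x with hL
  set G : ℕ → ℕ → ℝ := fun m j =>
    (-1 : ℝ) ^ j * x ^ (j + 2) / (((m : ℝ) + 1) ^ (j + 2) * ((j : ℝ) + 2)) with hG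
  have hm1 : ∀ m : ℕ, (0 : ℝ) < (m : ℝ) + 1 := fun m => by positivity
  have hmge : ∀ m : ℕ, (1 : ℝ) ≤ (m : ℝ) + 1 := fun m => by
    have : (0:ℝ) ≤ (m:ℝ) := Nat.cast_nonneg m
    linarith
  have htle : ∀ m : ℕ, x / ((m : ℝ) + 1) ≤ x := fun m => div_le_self hx0 (hmge m)
  have ht0 : ∀ m : ℕ, 0 ≤ x / ((m : ℝ) + 1) := fun m => div_nonneg hx0 (hm1 m).le
  have htabs : ∀ m : ℕ, |x / ((m : ℝ) + 1)| < 1 := fun m => by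
    rw [abs_of_nonneg (ht0 m)]; exact lt_of_le_of_lt (htle m) hx1
  -- rows
  have hrow : ∀ m : ℕ, HasSum (fun j => G m j)
      (x / ((m : ℝ) + 1) - Real.log (1 + x / ((m : ℝ) + 1))) := by
    intro m
    have h := hasSum_log_aux (htabs m)
    convert h using 1
    funext j
    rw [hG]
    rw [div_pow, mul_div_assoc', div_div]
  -- columns
  have hcol : ∀ j : ℕ, HasSum (fun m => G m j)
      ((-1 : ℝ) ^ j * x ^ (j + 2) / ((j : ℝ) + 2) * zr (j + 2)) := by
    intro j
    have h := (zr_summable (k := j + 2) (by omega)).hasSum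
    have h2 := h.mul_left ((-1 : ℝ) ^ j * x ^ (j + 2) / ((j : ℝ) + 2))
    convert h2 using 1
    · rfl
    funext m
    rw [hG]
    rw [mul_one_div, div_div, mul_comm ((j : ℝ) + 2)]
    rfl
  -- summability of the double series
  have habs : ∀ m j : ℕ, |G m j| ≤ (x / ((m : ℝ) + 1)) ^ 2 * (x / ((m : ℝ) + 1)) ^ j := by
    intro m j
    rw [hG]
    have h1 : |(-1 : ℝ) ^ j * x ^ (j + 2) / (((m : ℝ) + 1) ^ (j + 2) * ((j : ℝ) + 2))|
        = x ^ (j + 2) / (((m : ℝ) + 1) ^ (j + 2) * ((j : ℝ) + 2)) := by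
      rw [abs_div, abs_mul, abs_pow, abs_neg, abs_one, one_pow, one_mul, abs_pow,
        abs_of_nonneg hx0, abs_of_nonneg (by positivity : (0:ℝ) ≤ ((m : ℝ) + 1) ^ (j + 2) * ((j : ℝ) + 2))]
    rw [h1, ← pow_add, show 2 + j = j + 2 by ring, div_pow]
    have hj2 : (1 : ℝ) ≤ (j : ℝ) + 2 := by
      have : (0:ℝ) ≤ (j:ℝ) := Nat.cast_nonneg j
      linarith
    apply div_le_div_of_nonneg_left (by positivity) (by positivity)
    exact le_mul_of_one_le_right (by positivity) hj2
  have hrowabs : ∀ m : ℕ, Summable (fun j => |G m j|) := by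
    intro m
    apply Summable.of_nonneg_of_le (fun j => abs_nonneg _) (habs m)
    exact (summable_geometric_of_lt_one (ht0 m) (lt_of_le_of_lt (htle m) hx1)).mul_left _
  have hrowsumabs : ∀ m : ℕ, ∑' j, |G m j|
      ≤ (x ^ 2 * (1 - x)⁻¹) * (1 / ((m : ℝ) + 1) ^ 2) := by
    intro m
    have h1 : ∑' j, |G m j| ≤ ∑' j : ℕ, (x / ((m : ℝ) + 1)) ^ 2 * (x / ((m : ℝ) + 1)) ^ j :=
      Summable.tsum_le_tsum (habs m) (hrowabs m)
        ((summable_geometric_of_lt_one (ht0 m) (lt_of_le_of_lt (htle m) hx1)).mul_left _)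
    rw [tsum_mul_left, tsum_geometric_of_lt_one (ht0 m) (lt_of_le_of_lt (htle m) hx1)] at h1
    refine h1.trans ?_
    rw [div_pow]
    have httle : x / ((m : ℝ) + 1) ≤ x := htle m
    have h2 : (1 - x / ((m : ℝ) + 1))⁻¹ ≤ (1 - x)⁻¹ := by
      apply inv_anti₀ (by linarith) (by linarith)
    have h3 : (0:ℝ) ≤ x ^ 2 / ((m : ℝ) + 1) ^ 2 := by positivity
    calc x ^ 2 / ((m : ℝ) + 1) ^ 2 * (1 - x / ((m : ℝ) + 1))⁻¹
        ≤ x ^ 2 / ((m : ℝ) + 1) ^ 2 * (1 - x)⁻¹ := by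
          apply mul_le_mul_of_nonneg_left h2 h3
      _ = x ^ 2 * (1 - x)⁻¹ * (1 / ((m : ℝ) + 1) ^ 2) := by ring
  have hGsum : Summable (Function.uncurry G) := by
    have h : Summable (fun p : ℕ × ℕ => |G p.1 p.2|) := by
      refine (summable_prod_of_nonneg (fun p => abs_nonneg _)).mpr ⟨fun m => hrowabs m, ?_⟩
      apply Summable.of_nonneg_of_le (fun m => tsum_nonneg fun j => abs_nonneg _) hrowsumabs
      exact ((zr_summable (k := 2) le_rfl).mul_left _)
    exact h.of_abs
  -- Fubini
  have hfub : ∑' j, ∑' m, G m j = ∑' m, ∑' j, G m j :=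
    Summable.tsum_comm' hGsum (fun m => (hrow m).summable) (fun j => (hcol j).summable)
  have hLs : L = ∑' j : ℕ, (-1 : ℝ) ^ j * x ^ (j + 2) / ((j : ℝ) + 2) * zr (j + 2) := by
    have e1 : L = ∑' m : ℕ, (x / ((m : ℝ) + 1) - Real.log (1 + x / ((m : ℝ) + 1))) :=
      (hasSum_log_gamma x hx1 hx0).tsum_eq.symm
    rw [e1, tsum_congr (fun m => (hrow m).tsum_eq.symm), ← hfub]
    exact tsum_congr fun j => (hcol j).tsum_eq
  -- summability of the column-sum sequence
  have hcs : Summable (fun j : ℕ => (-1 : ℝ) ^ j * x ^ (j + 2) / ((j : ℝ) + 2) * zr (j + 2)) := by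
    apply Summable.of_abs
    have hb : Summable (fun j : ℕ => zr 2 * (x ^ 2 * x ^ j)) :=
      ((summable_geometric_of_lt_one hx0 hx1).mul_left _).mul_left _
    refine Summable.of_nonneg_of_le (fun j => abs_nonneg _) (fun j => ?_) hb
    ·
      rw [abs_mul, abs_div, abs_mul, abs_pow, abs_neg, abs_one, one_pow, one_mul, abs_pow,
        abs_of_nonneg hx0, abs_of_nonneg (zr_nonneg _),
        abs_of_nonneg (by positivity : (0:ℝ) ≤ (j : ℝ) + 2)]
      have h1 : x ^ (j + 2) / ((j : ℝ) + 2) ≤ x ^ (j + 2) := by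
        apply div_le_self (by positivity)
        have : (0:ℝ) ≤ (j:ℝ) := Nat.cast_nonneg j
        linarith
      have h2 : zr (j + 2) ≤ zr 2 := zr_le (by omega)
      calc x ^ (j + 2) / ((j : ℝ) + 2) * zr (j + 2)
          ≤ x ^ (j + 2) * zr 2 := by
            apply mul_le_mul h1 h2 (zr_nonneg _) (by positivity)
        _ = zr 2 * (x ^ 2 * x ^ j) := by rw [pow_add]; ring
  have hcolHasSum : HasSum
      (fun j : ℕ => (-1 : ℝ) ^ j * x ^ (j + 2) / ((j : ℝ) + 2) * zr (j + 2)) L := by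
    rw [hLs]
    exact hcs.hasSum
  -- shift the index
  set c : ℕ → ℝ := fun k => if k = 0 then 0 else
      (-1 : ℝ) ^ (k - 1) * x ^ (k + 1) * zr (k + 1) / ((k : ℝ) + 1) with hc
  have hshift : ∀ j : ℕ, c (j + 1) = (-1 : ℝ) ^ j * x ^ (j + 2) / ((j : ℝ) + 2) * zr (j + 2) := by
    intro j
    rw [hc]
    simp only [Nat.add_sub_cancel, Nat.succ_ne_zero, if_false]
    push_cast
    ring
  have h1 : HasSum (fun j : ℕ => c (j + 1)) L := by
    rw [show (fun j : ℕ => c (j + 1))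
        = fun j : ℕ => (-1 : ℝ) ^ j * x ^ (j + 2) / ((j : ℝ) + 2) * zr (j + 2)
      from funext hshift]
    exact hcolHasSum
  have h2 := (hasSum_nat_add_iff (f := c) 1).mp h1
  simpa [hc] using h2

lemma real_side (x μ : ℝ) (hx1 : x < 1) (hx0 : 0 ≤ x) (hμ0 : 0 < μ) (hμ1 : μ ≤ 1) :
    Real.log (Real.Gamma (x + 1)) + Real.eulerMascheroniConstant * x
      = ∑' n : ℕ, μ ^ n / (μ + 1) ^ (n + 1) *
          ∑ k ∈ Icc 1 n, (n.choose k : ℝ) *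
            (x ^ (k + 1) / (μ ^ k * ((k : ℝ) + 1))) * (-1) ^ (k - 1) * zr (k + 1) := by
  have hμ1' : (0 : ℝ) < μ + 1 := by linarith
  set F : ℕ → ℕ → ℝ := fun n k => if k = 0 then 0 else
    (n.choose k : ℝ) * (μ ^ n / (μ + 1) ^ (n + 1)) *
      (x ^ (k + 1) / (μ ^ k * ((k : ℝ) + 1))) * (-1 : ℝ) ^ (k - 1) * zr (k + 1) with hF
  -- each row is a finite sum
  have hFrow0 : ∀ n : ℕ, ∀ k ∉ Icc 1 n, F n k = 0 := by
    intro n k hk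
    rw [mem_Icc, not_and_or] at hk
    rcases hk with hk | hk
    · have : k = 0 := by omega
      simp [hF, this]
    · have : n < k := by omega
      simp [hF, Nat.choose_eq_zero_of_lt this]
  have hrow_eq : ∀ n : ℕ, μ ^ n / (μ + 1) ^ (n + 1) *
      ∑ k ∈ Icc 1 n, (n.choose k : ℝ) *
        (x ^ (k + 1) / (μ ^ k * ((k : ℝ) + 1))) * (-1) ^ (k - 1) * zr (k + 1)
      = ∑' k : ℕ, F n k := by
    intro n
    rw [tsum_eq_sum (hFrow0 n), Finset.mul_sum]
    refine Finset.sum_congr rfl fun k hk => ?_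
    rw [mem_Icc] at hk
    rw [hF]
    have hk0 : k ≠ 0 := by omega
    simp only [hk0, if_false]
    ring
  -- column sums
  set c : ℕ → ℝ := fun k => if k = 0 then 0 else
      (-1 : ℝ) ^ (k - 1) * x ^ (k + 1) * zr (k + 1) / ((k : ℝ) + 1) with hc
  have hr01 : (0 : ℝ) ≤ μ / (μ + 1) := by positivity
  have hr1 : μ / (μ + 1) < 1 := by
    rw [div_lt_one hμ1']
    linarith
  have hrabs : ‖μ / (μ + 1)‖ < 1 := by
    rw [Real.norm_eq_abs, abs_of_nonneg hr01]
    exact hr1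
  have hcol : ∀ k : ℕ, HasSum (fun n => F n k) (c k) := by
    intro k
    rcases Nat.eq_zero_or_pos k with rfl | hk
    · simp only [hF, hc, if_true]
      simpa using hasSum_zero
    have hk0 : k ≠ 0 := by omega
    have hkne : ((k : ℝ) + 1) ≠ 0 := by positivity
    have h0 := hasSum_choose_mul_geometric_of_norm_lt_one (𝕜 := ℝ) k hrabs
    set D : ℝ := x ^ (k + 1) / (μ ^ k * ((k : ℝ) + 1)) * (-1 : ℝ) ^ (k - 1) * zr (k + 1) with hD
    have h1 := h0.mul_left (μ ^ k / (μ + 1) ^ (k + 1) * D)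
    have epow : ∀ n : ℕ, μ ^ (n + k) / (μ + 1) ^ (n + k + 1)
        = μ ^ k / (μ + 1) ^ (k + 1) * (μ / (μ + 1)) ^ n := by
      intro n
      rw [div_pow, div_mul_div_comm, ← pow_add, ← pow_add]
      ring
    have hshift : (fun n : ℕ => μ ^ k / (μ + 1) ^ (k + 1) * D *
        (((n + k).choose k : ℝ) * (μ / (μ + 1)) ^ n)) = fun n : ℕ => F (n + k) k := by
      funext n
      rw [hF]
      simp only [hk0, if_false]
      rw [epow n, hD]
      ring
    rw [hshift] at h1
    have hval : μ ^ k / (μ + 1) ^ (k + 1) * D * (1 / (1 - μ / (μ + 1)) ^ (k + 1)) = c k := by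
      have e1 : 1 - μ / (μ + 1) = 1 / (μ + 1) := by
        field_simp
        ring
      rw [e1, hc, hD]
      simp only [hk0, if_false, one_div, inv_pow, inv_inv]
      field_simp [hμ0.ne', hμ1'.ne', hkne]
    rw [hval] at h1
    have h2 := (hasSum_nat_add_iff (f := fun n => F n k) k).mp h1
    have hzero : ∑ i ∈ range k, F i k = 0 := by
      apply Finset.sum_eq_zero
      intro i hi
      rw [mem_range] at hi
      rw [hF]
      simp [Nat.choose_eq_zero_of_lt hi]
    rw [hzero, add_zero] at h2
    exact h2
  -- absolute summability of the double series
  have habs_term : ∀ n k : ℕ, 1 ≤ k → k ≤ n →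
      |F n k| ≤ (x * zr 2 / (μ + 1)) *
        ((x ^ k * μ ^ (n - k) * (n.choose k : ℝ)) / (μ + 1) ^ n) := by
    intro n k h1 h2
    have hk0 : k ≠ 0 := by omega
    have hkne : ((k : ℝ) + 1) ≠ 0 := by positivity
    have hzr1 : 0 ≤ zr (k + 1) := zr_nonneg _
    have e : μ ^ n = μ ^ (n - k) * μ ^ k := by
      rw [← pow_add]
      congr 1
      omega
    have eabs : |F n k| = (x * zr (k + 1) / (μ + 1)) *
        ((x ^ k * μ ^ (n - k) * (n.choose k : ℝ)) / (μ + 1) ^ n) / ((k : ℝ) + 1) := by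
      rw [hF]
      simp only [hk0, if_false]
      rw [abs_mul, abs_mul, abs_mul, abs_mul, abs_pow, abs_neg, abs_one, one_pow, mul_one,
        abs_of_nonneg (zr_nonneg _), Nat.abs_cast,
        abs_of_nonneg (by positivity : (0:ℝ) ≤ μ ^ n / (μ + 1) ^ (n + 1)),
        abs_of_nonneg (by positivity : (0:ℝ) ≤ x ^ (k + 1) / (μ ^ k * ((k:ℝ) + 1)))]
      rw [e, pow_succ x k, pow_succ (μ + 1) n]
      field_simp [hμ0.ne', hμ1'.ne']
    rw [eabs]
    have hA : (0:ℝ) ≤ (x ^ k * μ ^ (n - k) * (n.choose k : ℝ)) / (μ + 1) ^ n := by positivity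
    have hB : (0:ℝ) ≤ (x * zr (k + 1) / (μ + 1)) *
        ((x ^ k * μ ^ (n - k) * (n.choose k : ℝ)) / (μ + 1) ^ n) :=
      mul_nonneg (div_nonneg (mul_nonneg hx0 hzr1) hμ1'.le) hA
    have step1 := div_le_self hB (by
      have : (0:ℝ) ≤ (k:ℝ) := Nat.cast_nonneg k
      linarith : (1:ℝ) ≤ (k : ℝ) + 1)
    refine step1.trans ?_
    have hmono : x * zr (k + 1) ≤ x * zr 2 :=
      mul_le_mul_of_nonneg_left (zr_le (by omega)) hx0
    exact mul_le_mul_of_nonneg_right ((div_le_div_iff_of_pos_right hμ1').mpr hmono) hA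
  have hrowzero : ∀ n : ℕ, ∀ k ∉ Icc 1 n, |F n k| = 0 := fun n k hk => by
    rw [hFrow0 n k hk, abs_zero]
  have hrowabs : ∀ n : ℕ, Summable (fun k => |F n k|) := fun n =>
    summable_of_ne_finset_zero (hrowzero n)
  have hrowsummable : ∀ n : ℕ, Summable (F n) := fun n =>
    summable_of_ne_finset_zero (hFrow0 n)
  have hzr2 : (0:ℝ) ≤ zr 2 := zr_nonneg _
  have hrowsum : ∀ n : ℕ, ∑' k, |F n k|
      ≤ (x * zr 2 / (μ + 1)) * ((x + μ) / (μ + 1)) ^ n := by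
    intro n
    rw [tsum_eq_sum (hrowzero n)]
    have h1 : ∑ k ∈ Icc 1 n, |F n k| ≤ ∑ k ∈ Icc 1 n, (x * zr 2 / (μ + 1)) *
        ((x ^ k * μ ^ (n - k) * (n.choose k : ℝ)) / (μ + 1) ^ n) := by
      apply Finset.sum_le_sum
      intro k hk
      rw [mem_Icc] at hk
      exact habs_term n k hk.1 hk.2
    refine h1.trans ?_
    rw [← Finset.mul_sum, div_pow]
    have h2 : ∑ k ∈ Icc 1 n, (x ^ k * μ ^ (n - k) * (n.choose k : ℝ)) / (μ + 1) ^ n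
        ≤ (x + μ) ^ n / (μ + 1) ^ n := by
      rw [add_pow x μ n, Finset.sum_div]
      apply Finset.sum_le_sum_of_subset_of_nonneg
      · intro k hk
        rw [mem_Icc] at hk
        rw [mem_range]
        omega
      · intro k _ _
        positivity
    exact mul_le_mul_of_nonneg_left h2 (by positivity)
  have hratio0 : (0:ℝ) ≤ (x + μ) / (μ + 1) := by positivity
  have hratio1 : (x + μ) / (μ + 1) < 1 := by
    rw [div_lt_one hμ1']
    linarith
  have hFsum : Summable (Function.uncurry F) := by
    have h : Summable (fun p : ℕ × ℕ => |F p.1 p.2|) := by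
      refine (summable_prod_of_nonneg (fun p => abs_nonneg _)).mpr ⟨fun n => hrowabs n, ?_⟩
      apply Summable.of_nonneg_of_le (fun n => tsum_nonneg fun k => abs_nonneg _) hrowsum
      exact (summable_geometric_of_lt_one hratio0 hratio1).mul_left _
    exact h.of_abs
  calc Real.log (Real.Gamma (x + 1)) + Real.eulerMascheroniConstant * x
      = ∑' k : ℕ, c k := (hasSum_cprime x hx1 hx0).tsum_eq.symm
    _ = ∑' k : ℕ, ∑' n : ℕ, F n k := tsum_congr fun k => (hcol k).tsum_eq.symm
    _ = ∑' n : ℕ, ∑' k : ℕ, F n k :=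
        Summable.tsum_comm' hFsum (fun n => hrowsummable n) (fun k => (hcol k).summable)
    _ = ∑' n : ℕ, μ ^ n / (μ + 1) ^ (n + 1) *
          ∑ k ∈ Icc 1 n, (n.choose k : ℝ) *
            (x ^ (k + 1) / (μ ^ k * ((k : ℝ) + 1))) * (-1) ^ (k - 1) * zr (k + 1) :=
        tsum_congr fun n => (hrow_eq n).symm

theorem logGamma_param (x μ : ℝ) (hx : |x| < 1) (hx0 : 0 ≤ x)
    (hμ0 : 0 < μ) (hμ1 : μ ≤ 1) :
    ((Real.log (Real.Gamma (x + 1)) + Real.eulerMascheroniConstant * x : ℝ) : ℂ) =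
      ∑' n : ℕ, (μ : ℂ) ^ n / ((μ : ℂ) + 1) ^ (n + 1) *
        ∑ k ∈ Icc 1 n, (n.choose k : ℂ) *
          ((x : ℂ) ^ (k + 1) / ((μ : ℂ) ^ k * ((k : ℂ) + 1))) *
          (-1) ^ (k - 1) * riemannZeta ((k : ℂ) + 1) := by
  have hx1 : x < 1 := lt_of_le_of_lt (le_abs_self x) hx
  have hterm : ∀ n : ℕ, (μ : ℂ) ^ n / ((μ : ℂ) + 1) ^ (n + 1) *
      ∑ k ∈ Icc 1 n, (n.choose k : ℂ) *
        ((x : ℂ) ^ (k + 1) / ((μ : ℂ) ^ k * ((k : ℂ) + 1))) *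
        (-1) ^ (k - 1) * riemannZeta ((k : ℂ) + 1)
      = ((μ ^ n / (μ + 1) ^ (n + 1) *
          ∑ k ∈ Icc 1 n, (n.choose k : ℝ) *
            (x ^ (k + 1) / (μ ^ k * ((k : ℝ) + 1))) * (-1) ^ (k - 1) * zr (k + 1) : ℝ) : ℂ) := by
    intro n
    have hsum : (∑ k ∈ Icc 1 n, (n.choose k : ℂ) *
          ((x : ℂ) ^ (k + 1) / ((μ : ℂ) ^ k * ((k : ℂ) + 1))) *
          (-1) ^ (k - 1) * riemannZeta ((k : ℂ) + 1))
        = ∑ k ∈ Icc 1 n, (n.choose k : ℂ) *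
          ((x : ℂ) ^ (k + 1) / ((μ : ℂ) ^ k * ((k : ℂ) + 1))) *
          (-1) ^ (k - 1) * ((zr (k + 1) : ℝ) : ℂ) :=
      Finset.sum_congr rfl fun k hk => by rw [zeta_eq_zr k (mem_Icc.mp hk).1]
    rw [hsum]
    push_cast
    norm_num
  rw [real_side x μ hx1 hx0 hμ0 hμ1, Complex.ofReal_tsum]
  exact tsum_congr fun n => (hterm n).symm
end

section
/- Euler's constant satisfies γ = ∑_{n=0}^∞ (1/2^{n+1}) ∑_{k=1}^n C(n,k) (-1)^{k-1} ζ(k+1)/(k+1). -/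
open Finset

open Filter Topology

noncomputable def xx (m : ℕ) : ℝ := 1 / ((m : ℝ) + 1)
noncomputable def ff (n m : ℕ) : ℝ := xx m - (1 - (1 - xx m) ^ (n + 1)) / (n + 1)
noncomputable def FF (m : ℕ) : ℝ := xx m - (Real.log ((m : ℝ) + 2) - Real.log ((m : ℝ) + 1))

lemma xx_pos (m : ℕ) : 0 < xx m := by
  unfold xx; positivity

lemma xx_le_one (m : ℕ) : xx m ≤ 1 := by
  unfold xx
  rw [div_le_one (by positivity)]
  linarith [Nat.cast_nonneg (α := ℝ) m]

lemma ff_nonneg (n m : ℕ) : 0 ≤ ff n m := by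
  have h := one_add_mul_le_pow (a := -xx m) (by linarith [xx_le_one m, xx_pos m]) (n + 1)
  unfold ff
  rw [sub_nonneg, div_le_iff₀ (by positivity : (0:ℝ) < (n:ℝ) + 1)]
  rw [show (1:ℝ) + -xx m = 1 - xx m by ring] at h
  push_cast at h ⊢
  nlinarith

lemma FF_eq (m : ℕ) : FF m = xx m - (Real.log 2 - -Real.log (1 - (1 - xx m) / 2)) := by
  have h1 : 1 - (1 - xx m) / 2 = ((m : ℝ) + 2) / (2 * ((m : ℝ) + 1)) := by
    unfold xx; field_simp; ring
  have hm1 : (0:ℝ) < (m : ℝ) + 1 := by positivity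
  have hm2 : (0:ℝ) < (m : ℝ) + 2 := by positivity
  rw [FF, h1, Real.log_div hm2.ne' (by positivity), Real.log_mul (by norm_num) hm1.ne']
  ring

lemma hasSum_col (m : ℕ) : HasSum (fun n : ℕ => (1/2:ℝ) ^ (n+1) * ff n m) (FF m) := by
  have hy0 : 0 ≤ 1 - xx m := by linarith [xx_le_one m]
  have hy1 : 1 - xx m < 1 := by linarith [xx_pos m]
  have h1 : HasSum (fun n : ℕ => (1/2:ℝ) ^ (n+1) * xx m) (xx m) := by
    have := (hasSum_geometric_of_lt_one (by norm_num : (0:ℝ) ≤ 1/2) (by norm_num)).mul_left (1/2 : ℝ)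
    have h2 := this.mul_right (xx m)
    simp only [← pow_succ'] at h2
    rw [show (1/2:ℝ) * (1 - 1/2)⁻¹ * xx m = xx m by norm_num] at h2
    exact h2
  have h2 : HasSum (fun n : ℕ => (1/2:ℝ) ^ (n+1) / (n+1)) (Real.log 2) := by
    have := Real.hasSum_pow_div_log_of_abs_lt_one (x := (1/2:ℝ)) (by rw [abs_of_pos] <;> norm_num)
    rw [show (1:ℝ) - 1/2 = 1/2 by norm_num, Real.log_div one_ne_zero two_ne_zero, Real.log_one] at this
    simpa using this
  have h3 : HasSum (fun n : ℕ => ((1 - xx m)/2:ℝ) ^ (n+1) / (n+1))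
      (-Real.log (1 - (1 - xx m)/2)) := by
    exact Real.hasSum_pow_div_log_of_abs_lt_one (by rw [abs_of_nonneg (by positivity)]; linarith)
  have hcomb := h1.sub (h2.sub h3)
  rw [← FF_eq] at hcomb
  have key : ∀ n : ℕ, (1/2:ℝ)^(n+1) * ff n m
      = (1/2:ℝ)^(n+1) * xx m - ((1/2:ℝ)^(n+1)/(n+1) - ((1 - xx m)/2:ℝ)^(n+1)/(n+1)) := by
    intro n
    have h2n : (2:ℝ)^(n+1) ≠ 0 := by positivity
    have hn1 : ((n:ℝ)+1) ≠ 0 := by positivity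
    unfold ff
    rw [show ((1 - xx m)/2:ℝ)^(n+1) = (1/2:ℝ)^(n+1) * (1-xx m)^(n+1) by rw [← mul_pow]; ring]
    field_simp
  rw [funext key]
  exact hcomb

lemma FF_nonneg (m : ℕ) : 0 ≤ FF m := by
  have hm1 : (0:ℝ) < (m : ℝ) + 1 := by positivity
  have h := Real.log_le_sub_one_of_pos (show (0:ℝ) < ((m:ℝ)+2)/((m:ℝ)+1) by positivity)
  rw [Real.log_div (by positivity) hm1.ne'] at h
  have hx : ((m:ℝ)+2)/((m:ℝ)+1) - 1 = xx m := by
    unfold xx; field_simp; ring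
  rw [hx] at h
  unfold FF
  linarith

lemma hasSum_FF : HasSum FF Real.eulerMascheroniConstant := by
  rw [hasSum_iff_tendsto_nat_of_nonneg FF_nonneg]
  have key : ∀ N : ℕ, ∑ m ∈ range N, FF m = (harmonic N : ℝ) - Real.log (N + 1) := by
    intro N
    unfold FF
    rw [Finset.sum_sub_distrib]
    congr 1
    · rw [harmonic, Rat.cast_sum]
      refine Finset.sum_congr rfl fun m _ => ?_
      unfold xx
      push_cast
      rw [one_div]
    · calc ∑ x ∈ range N, (Real.log ((x:ℝ)+2) - Real.log ((x:ℝ)+1))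
          = ∑ x ∈ range N, (Real.log (((x+1:ℕ):ℝ)+1) - Real.log ((x:ℝ)+1)) := by
            refine Finset.sum_congr rfl fun m _ => by push_cast; ring_nf
        _ = Real.log (((N:ℕ):ℝ)+1) - Real.log (((0:ℕ):ℝ)+1) :=
            Finset.sum_range_sub (fun m : ℕ => Real.log ((m:ℝ)+1)) N
        _ = Real.log ((N:ℝ)+1) := by norm_num
  simp only [key]
  exact Real.tendsto_harmonic_sub_log_add_one

lemma summ_pow {j : ℕ} (hj : 2 ≤ j) : Summable (fun m : ℕ => xx m ^ j) := by
  have h := Real.summable_one_div_nat_pow.mpr hj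
  have h2 := (summable_nat_add_iff 1).mpr h
  refine h2.congr fun m => ?_
  unfold xx
  push_cast
  rw [div_pow, one_pow]

lemma poly (n : ℕ) (t : ℝ) :
    ∑ k ∈ Icc 1 n, (n.choose k : ℝ) * (-1) ^ (k - 1) * t ^ (k + 1) / (k + 1)
      = t - (1 - (1 - t) ^ (n + 1)) / (n + 1) := by
  have hb : (1 - t) ^ (n + 1)
      = ∑ i ∈ range n, (-t) ^ (i + 1 + 1) * (((n + 1).choose (i + 1 + 1) : ℕ) : ℝ) + ((-t) * (n + 1) + 1) := by
    rw [sub_eq_add_neg, add_comm, add_pow, Finset.sum_range_succ', Finset.sum_range_succ']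
    norm_num
    push_cast
    ring
  rw [hb, ← Finset.Ico_add_one_right_eq_Icc, Finset.sum_Ico_eq_sum_range]
  simp only [Nat.add_sub_cancel, Nat.add_sub_cancel_left]
  rw [show (1:ℝ) - (∑ i ∈ range n, (-t) ^ (i + 1 + 1) * (((n + 1).choose (i + 1 + 1) : ℕ) : ℝ) + ((-t) * (n + 1) + 1)) = t * (n+1) - ∑ i ∈ range n, (-t) ^ (i + 1 + 1) * (((n + 1).choose (i + 1 + 1) : ℕ) : ℝ) by ring]
  rw [sub_div, mul_div_assoc, div_self (by positivity : ((n:ℝ)+1) ≠ 0), mul_one, sub_sub_cancel,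
    Finset.sum_div]
  refine Finset.sum_congr rfl fun i _ => ?_
  have hc : ((n:ℝ) + 1) * (n.choose (i+1) : ℝ) = (((n+1).choose (i+2) : ℕ) : ℝ) * ((i:ℝ) + 2) := by
    exact_mod_cast congrArg (Nat.cast (R := ℝ)) (Nat.add_one_mul_choose_eq n (i+1))
  have h2 : ((i:ℝ) + 2) ≠ 0 := by positivity
  have hn : ((n:ℝ) + 1) ≠ 0 := by positivity
  rw [show (-t) ^ (i+1+1) = (-1:ℝ)^i * t^(i+1+1) by
    rw [show (-t) = (-1:ℝ)*t by ring, mul_pow, pow_succ, pow_succ]; ring]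
  push_cast
  rw [div_eq_div_iff (by positivity) hn]
  simp only [Nat.add_comm 1 i]
  push_cast at hc ⊢
  linear_combination ((-1:ℝ)^i * t^(i+1+1)) * hc

lemma stepA (n : ℕ) :
    ∑ k ∈ Icc 1 n, (n.choose k : ℝ) * (-1) ^ (k - 1) * (∑' m : ℕ, xx m ^ (k + 1)) / (k + 1)
      = ∑' m : ℕ, ff n m := by
  have hterm : ∀ k ∈ Icc 1 n,
      (n.choose k : ℝ) * (-1) ^ (k - 1) * (∑' m : ℕ, xx m ^ (k + 1)) / (k + 1)
        = ∑' m : ℕ, (n.choose k : ℝ) * (-1) ^ (k - 1) * xx m ^ (k + 1) / (k + 1) := by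
    intro k _
    rw [← tsum_mul_left, ← tsum_div_const]
  rw [Finset.sum_congr rfl hterm, ← Summable.tsum_finsetSum]
  · exact tsum_congr fun m => by rw [poly n (xx m)]; rfl
  · intro k hk
    have hk1 : 1 ≤ k := (mem_Icc.mp hk).1
    exact ((summ_pow (by omega)).mul_left _).div_const _

lemma zeta_real {k : ℕ} (hk : 1 ≤ k) :
    riemannZeta ((k : ℂ) + 1) = ((∑' m : ℕ, xx m ^ (k + 1) : ℝ) : ℂ) := by
  rw [zeta_eq_tsum_one_div_nat_add_one_cpow (by
    simp only [Complex.add_re, Complex.natCast_re, Complex.one_re]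
    have : (1:ℝ) ≤ k := by exact_mod_cast hk
    linarith)]
  rw [Complex.ofReal_tsum]
  refine tsum_congr fun m => ?_
  rw [show ((k:ℂ) + 1) = ((k + 1 : ℕ) : ℂ) by push_cast; ring, Complex.cpow_natCast]
  unfold xx
  push_cast
  rw [div_pow, one_pow]

lemma main_real :
    HasSum (fun n : ℕ => (1/2:ℝ) ^ (n + 1) * ∑' m : ℕ, ff n m)
      Real.eulerMascheroniConstant := by
  set g : ℕ × ℕ → ℝ := fun p => (1/2:ℝ) ^ (p.2 + 1) * ff p.2 p.1 with hg
  have hg0 : (0:ℕ × ℕ → ℝ) ≤ g := fun p => by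
    simpa using mul_nonneg (by positivity) (ff_nonneg p.2 p.1)
  have hslice : ∀ m : ℕ, HasSum (fun n => g (m, n)) (FF m) := fun m => hasSum_col m
  have hsum : Summable g := by
    refine (summable_prod_of_nonneg hg0).mpr ⟨fun m => (hslice m).summable, ?_⟩
    have : (fun m : ℕ => ∑' n, g (m, n)) = FF := funext fun m => (hslice m).tsum_eq
    rw [this]
    exact hasSum_FF.summable
  have htsum : ∑' p, g p = Real.eulerMascheroniConstant := by
    rw [Summable.tsum_prod hsum, tsum_congr fun m => (hslice m).tsum_eq, hasSum_FF.tsum_eq]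
  have hgs : HasSum g Real.eulerMascheroniConstant := htsum ▸ hsum.hasSum
  have hswap : HasSum (fun p : ℕ × ℕ => g p.swap) Real.eulerMascheroniConstant :=
    (Equiv.prodComm ℕ ℕ).hasSum_iff.mpr hgs
  have hcol : ∀ n : ℕ, Summable fun m => g (m, n) := fun n => hsum.prod_symm.prod_factor n
  have hmarg : HasSum (fun n : ℕ => ∑' m, g (m, n)) Real.eulerMascheroniConstant :=
    hswap.prod_fiberwise fun n => (hcol n).hasSum
  have : (fun n : ℕ => ∑' m, g (m, n)) = fun n => (1/2:ℝ) ^ (n + 1) * ∑' m : ℕ, ff n m :=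
    funext fun n => by simp only [hg]; exact tsum_mul_left
  rwa [this] at hmarg

theorem eulerGamma_series :
    (Real.eulerMascheroniConstant : ℂ) =
      ∑' n : ℕ, (1 / 2 ^ (n + 1) : ℂ) *
        ∑ k ∈ Icc 1 n, (n.choose k : ℂ) * (-1) ^ (k - 1) *
          riemannZeta ((k : ℂ) + 1) / ((k : ℂ) + 1) := by
  have hterm : ∀ n : ℕ, (1 / 2 ^ (n + 1) : ℂ) *
      ∑ k ∈ Icc 1 n, (n.choose k : ℂ) * (-1) ^ (k - 1) *
        riemannZeta ((k : ℂ) + 1) / ((k : ℂ) + 1)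
      = (((1/2:ℝ) ^ (n + 1) * ∑' m : ℕ, ff n m : ℝ) : ℂ) := by
    intro n
    have hsum_eq : ∑ k ∈ Icc 1 n, (n.choose k : ℂ) * (-1) ^ (k - 1) *
        riemannZeta ((k : ℂ) + 1) / ((k : ℂ) + 1)
        = ((∑ k ∈ Icc 1 n, (n.choose k : ℝ) * (-1) ^ (k - 1) *
            (∑' m : ℕ, xx m ^ (k + 1)) / ((k : ℝ) + 1) : ℝ) : ℂ) := by
      rw [Complex.ofReal_sum]
      refine Finset.sum_congr rfl fun k hk => ?_
      rw [zeta_real (mem_Icc.mp hk).1]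
      push_cast
      ring
    rw [hsum_eq, stepA n]
    push_cast
    rw [div_pow, one_pow]
  rw [tsum_congr hterm]
  rw [← Complex.ofReal_tsum]
  rw [main_real.tsum_eq]
end

section
/- For every natural number n ≥ 1, 1/2^{n+1} < ζ(n+1) - 1 < (1/2^{n+1})(1 + 2/n). -/
open Finset Filter Topology

private lemma key_ineq (m : ℕ) (x : ℝ) (hx : 2 ≤ x) :
    1 / (x + 1) ^ (m + 2) < (1 / ((m : ℝ) + 1)) * (1 / x ^ (m + 1) - 1 / (x + 1) ^ (m + 1)) := by
  have hx0 : (0:ℝ) < x := by linarith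
  have h1x : (0:ℝ) < x + 1 := by linarith
  have hm : (0:ℝ) < (m:ℝ) + 1 := by positivity
  have hb : x ^ (m+1) + ((m:ℝ)+1) * x ^ m ≤ (x+1) ^ (m+1) := by
    have h := one_add_mul_le_pow (a := 1/x) (by nlinarith [one_div_nonneg.mpr hx0.le] : (-2:ℝ) ≤ 1/x) (m+1)
    have h2 : x^(m+1) * (1 + ((m:ℝ)+1) * (1/x)) ≤ x^(m+1) * (1+1/x)^(m+1) := by
      refine mul_le_mul_of_nonneg_left ?_ (by positivity)
      push_cast at h ⊢
      linarith
    have e1 : x^(m+1) * (1+1/x)^(m+1) = (x+1)^(m+1) := by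
      rw [← mul_pow]
      congr 1
      field_simp
    have e2 : x^(m+1) * (1 + ((m:ℝ)+1) * (1/x)) = x^(m+1) + ((m:ℝ)+1)*x^m := by
      field_simp
      ring
    linarith [h2, e1, e2]
  have key2 : ((m:ℝ)+1) * x^(m+1) < (x+1) * ((x+1)^(m+1) - x^(m+1)) := by
    have hb' : ((m:ℝ)+1) * x^m ≤ (x+1)^(m+1) - x^(m+1) := by linarith
    have h3 := mul_le_mul_of_nonneg_left hb' h1x.le
    nlinarith [h3, pow_pos hx0 m, pow_succ x m, mul_pos hm (pow_pos hx0 m)]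
  have hrw : (1 / ((m : ℝ) + 1)) * (1 / x ^ (m + 1) - 1 / (x + 1) ^ (m + 1))
      = ((x+1)^(m+1) - x^(m+1)) / (((m:ℝ)+1) * (x^(m+1) * (x+1)^(m+1))) := by
    field_simp
  rw [hrw, div_lt_div_iff₀ (by positivity) (by positivity), one_mul]
  have e3 : (x+1)^(m+2) = (x+1)^(m+1) * (x+1) := by ring
  rw [e3]
  nlinarith [pow_pos hx0 (m+1), pow_pos h1x (m+1), key2, mul_pos hm (pow_pos hx0 (m+1))]

theorem zeta_estimate (n : ℕ) (hn : 1 ≤ n) :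
    (1 / 2 ^ (n + 1) : ℝ) < (riemannZeta ((n : ℂ) + 1)).re - 1 ∧
    (riemannZeta ((n : ℂ) + 1)).re - 1 < (1 / 2 ^ (n + 1) : ℝ) * (1 + 2 / (n : ℝ)) := by
  obtain ⟨m, rfl⟩ : ∃ m, n = m + 1 := ⟨n - 1, by omega⟩
  set n := m + 1 with hn'
  set f : ℕ → ℝ := fun k => 1 / (k : ℝ) ^ (n + 1) with hf
  have hS : Summable f := Real.summable_one_div_nat_pow.mpr (by omega)
  -- real part of zeta
  have hz : (riemannZeta ((n : ℂ) + 1)).re = ∑' k : ℕ, f k := by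
    have h1 : ((n:ℂ)+1) = ((n+1 : ℕ) : ℂ) := by push_cast; ring
    rw [h1, zeta_nat_eq_tsum_of_gt_one (by omega)]
    have h2 : ∑' k : ℕ, 1/(k:ℂ)^(n+1) = ((∑' k : ℕ, f k : ℝ) : ℂ) := by
      rw [Complex.ofReal_tsum]
      refine tsum_congr fun k => ?_
      simp only [hf]
      push_cast
      norm_num
    rw [h2, Complex.ofReal_re]
  -- split off first two terms
  have hsplit : ∑' k : ℕ, f k = 1 + ∑' i : ℕ, f (i + 2) := by
    rw [← Summable.sum_add_tsum_nat_add 2 hS]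
    have h01 : ∑ i ∈ Finset.range 2, f i = 1 := by
      rw [Finset.sum_range_succ, Finset.sum_range_one]
      norm_num [hf]
    rw [h01]
  have hT : (riemannZeta ((n : ℂ) + 1)).re - 1 = ∑' i : ℕ, f (i + 2) := by
    rw [hz, hsplit]; ring
  have hS2 : Summable (fun i : ℕ => f (i + 2)) := (summable_nat_add_iff 2).mpr hS
  have hS3 : Summable (fun i : ℕ => f (i + 3)) := (summable_nat_add_iff 3).mpr hS
  have hsplit2 : ∑' i : ℕ, f (i + 2) = 1 / 2 ^ (n+1) + ∑' i : ℕ, f (i + 3) := by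
    have h := Summable.sum_add_tsum_nat_add (f := fun i : ℕ => f (i + 2)) 1 hS2
    rw [← h, Finset.sum_range_one]
    have h2 : f (0 + 2) = 1 / 2 ^ (n+1) := by norm_num [hf]
    have h3 : ∑' i : ℕ, f (i + 1 + 2) = ∑' i : ℕ, f (i + 3) := tsum_congr fun i => by congr 1
    rw [h2, h3]
  constructor
  · -- lower bound
    rw [hT, hsplit2]
    have hpos : 0 < ∑' i : ℕ, f (i + 3) := by
      refine Summable.tsum_pos hS3 (fun i => by positivity) 0 (by positivity)
    linarith
  · -- upper bound
    rw [hT, hsplit2]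
    set a : ℕ → ℝ := fun i => 1 / ((i : ℝ) + 2) ^ n with ha
    have htel : HasSum (fun i : ℕ => a i - a (i + 1)) (a 0) := by
      have hnn : ∀ i : ℕ, 0 ≤ a i - a (i + 1) := by
        intro i
        have : a (i+1) ≤ a i := by
          apply one_div_le_one_div_of_le (by positivity)
          apply pow_le_pow_left₀ (by positivity)
          push_cast; linarith
        linarith
      rw [hasSum_iff_tendsto_nat_of_nonneg hnn]
      have heq : ∀ N : ℕ, ∑ i ∈ Finset.range N, (a i - a (i + 1)) = a 0 - a N :=
        fun N => Finset.sum_range_sub' a N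
      simp only [heq]
      have hz0 : Tendsto (fun N : ℕ => a N) atTop (𝓝 0) := by
        have hinf : Tendsto (fun N : ℕ => ((N:ℝ) + 2) ^ n) atTop atTop :=
          (tendsto_pow_atTop (by omega)).comp
            (tendsto_atTop_add_const_right atTop 2 tendsto_natCast_atTop_atTop)
        simpa [ha, one_div, Function.comp, Pi.inv_def] using hinf.inv_tendsto_atTop
      have hcs := (tendsto_const_nhds (x := a 0) (f := atTop (α := ℕ))).sub hz0
      simpa using hcs
    have hlt : ∑' i : ℕ, f (i + 3) < (1 / (n:ℝ)) * (a 0) := by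
      have := (htel.mul_left (1 / (n:ℝ))).tsum_eq
      rw [← this]
      refine Summable.tsum_lt_tsum_of_nonneg (i := 0) (fun i => by positivity) (fun i => ?_) ?_
        (htel.mul_left (1 / (n:ℝ))).summable
      · have hk := key_ineq m ((i:ℝ) + 2) (by push_cast; linarith)
        simp only [hf, ha, hn']
        push_cast
        have e1 : (i:ℝ) + 3 = ((i:ℝ) + 2) + 1 := by ring
        have e2 : (i:ℝ) + 1 + 2 = ((i:ℝ) + 2) + 1 := by ring
        rw [e1, e2]
        exact hk.le
      · have hk := key_ineq m 2 le_rfl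
        norm_num at hk
        simp only [hf, ha, hn']
        push_cast
        norm_num
        convert hk using 2 <;> norm_num <;> ring_nf
    have ha0 : a 0 = 1 / 2 ^ n := by simp [ha]
    have hfin : 1 / (2:ℝ) ^ (n+1) + (1 / (n:ℝ)) * (1 / 2 ^ n)
        = (1 / 2 ^ (n + 1) : ℝ) * (1 + 2 / (n : ℝ)) := by
      have hn0 : (n:ℝ) ≠ 0 := by positivity
      field_simp
      ring
    rw [ha0] at hlt
    linarith
end
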